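/- arXiv:1201.4941 — 7 statements merged into one kernel-verified Lean document; each statement's English description precedes it below -/
import Mathlib

section
/- The q-Eulerian polynomials A_n(t,q) defined by ∑_{n≥0} A_n(t,q) z^n/(q;q)_n = (e(z;q) − e(tz;q))/(e(tz;q) − t·e(z;q)) satisfy the symmetry t^n · A_n(1/t, q) = t · A_n(t,q) for all n ≥ 1, where the identity is between polynomials in t. -/
open Polynomial PowerSeries

/-- The variable `q` in the field `ℚ(q)` of rational functions. -/
noncomputable def qq : RatFunc ℚ := RatFunc.X

/-- The q-shifted factorial `(q;q)_n = ∏_{i=1}^n (1 - q^i)`. -/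
noncomputable def qfac (n : ℕ) : RatFunc ℚ := ∏ i ∈ Finset.range n, (1 - qq ^ (i + 1))

/-- The q-exponential `e(z;q) = ∑ z^n/(q;q)_n`, as a power series in `z` over `ℚ(q)[t]`. -/
noncomputable def qexpZ : PowerSeries (Polynomial (RatFunc ℚ)) :=
  PowerSeries.mk fun n => Polynomial.C (qfac n)⁻¹

/-- `e(tz;q) = ∑ t^n z^n/(q;q)_n`, as a power series in `z` over `ℚ(q)[t]`. -/
noncomputable def qexpTZ : PowerSeries (Polynomial (RatFunc ℚ)) :=
  PowerSeries.mk fun n => Polynomial.X ^ n * Polynomial.C (qfac n)⁻¹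

lemma qfac_ne_zero (n : ℕ) : qfac n ≠ 0 := by
  unfold qfac
  rw [Finset.prod_ne_zero_iff]
  intro i _
  have h : (1 : RatFunc ℚ) - qq ^ (i + 1)
      = algebraMap (Polynomial ℚ) (RatFunc ℚ) (1 - Polynomial.X ^ (i + 1)) := by
    simp [qq]
  rw [h]
  apply RatFunc.algebraMap_ne_zero
  intro hXp
  have := congrArg (fun p => Polynomial.coeff p 0) hXp
  simp [Polynomial.coeff_X_pow] at this

lemma my_reflect_sum {R : Type*} [Semiring R] {ι : Type*} (N : ℕ) (s : Finset ι)
    (f : ι → Polynomial R) :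
    Polynomial.reflect N (∑ i ∈ s, f i) = ∑ i ∈ s, Polynomial.reflect N (f i) := by
  ext j
  simp [Polynomial.coeff_reflect, Polynomial.finset_sum_coeff]

lemma my_reflect_succ {R : Type*} [Semiring R] {m : ℕ} (p : Polynomial R)
    (h : p.natDegree ≤ m) :
    Polynomial.reflect (m + 1) p = Polynomial.X * Polynomial.reflect m p := by
  ext i
  rw [Polynomial.coeff_reflect]
  cases i with
  | zero =>
    rw [Polynomial.revAt_le (Nat.zero_le _), Nat.sub_zero,
      Polynomial.coeff_eq_zero_of_natDegree_lt (lt_of_le_of_lt h (Nat.lt_succ_self m)),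
      Polynomial.mul_coeff_zero, Polynomial.coeff_X_zero, zero_mul]
  | succ j =>
    rw [Polynomial.coeff_X_mul, Polynomial.coeff_reflect]
    by_cases hj : j ≤ m
    · rw [Polynomial.revAt_le hj, Polynomial.revAt_le (by omega : j + 1 ≤ m + 1)]
      congr 1
      omega
    · rw [Polynomial.revAt_eq_self_of_lt (by omega), Polynomial.revAt_eq_self_of_lt (by omega),
        Polynomial.coeff_eq_zero_of_natDegree_lt (by omega),
        Polynomial.coeff_eq_zero_of_natDegree_lt (by omega)]

/-- If `A n = A_n(t,q)` are the q-Eulerian polynomials, defined by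
`∑_{n≥0} A_n(t,q) z^n/(q;q)_n = (e(z;q) − e(tz;q))/(e(tz;q) − t e(z;q))`
(stated in cross-multiplied form), then `t^n A_n(1/t,q) = t · A_n(t,q)` for `n ≥ 1`;
here `t^n A_n(1/t,q)` is the reflection (reversal) of `A_n` at degree `n`. -/
theorem qEulerian_symmetry (A : ℕ → Polynomial (RatFunc ℚ))
    (hA : (qexpTZ - PowerSeries.C (Polynomial.X : Polynomial (RatFunc ℚ)) * qexpZ) *
        PowerSeries.mk (fun n => A n * Polynomial.C (qfac n)⁻¹) = qexpZ - qexpTZ) :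
    ∀ n : ℕ, 1 ≤ n → (A n).reflect n = Polynomial.X * A n := by
  have hc : ∀ k : ℕ, (Polynomial.C (qfac k)⁻¹ : Polynomial (RatFunc ℚ)) ≠ 0 := fun k => by
    simpa using inv_ne_zero (qfac_ne_zero k)
  have hX1 : (1 - Polynomial.X : Polynomial (RatFunc ℚ)) ≠ 0 := fun h => by
    simpa [Polynomial.coeff_one] using congrArg (fun p => Polynomial.coeff p 1) h
  have hX1' : (Polynomial.X - 1 : Polynomial (RatFunc ℚ)) ≠ 0 := fun h => by
    simpa [Polynomial.coeff_one] using congrArg (fun p => Polynomial.coeff p 1) h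
  have hd1X : (1 - Polynomial.X : Polynomial (RatFunc ℚ)).natDegree = 1 := by
    have h : (1 - Polynomial.X : Polynomial (RatFunc ℚ))
        = -(Polynomial.X - Polynomial.C 1) := by rw [Polynomial.C_1]; ring
    rw [h, Polynomial.natDegree_neg, Polynomial.natDegree_X_sub_C]
  -- coefficient-wise form of the defining equation
  have key : ∀ n : ℕ, ∑ k ∈ Finset.range (n + 1),
      (Polynomial.X ^ k * Polynomial.C (qfac k)⁻¹ -
          Polynomial.X * Polynomial.C (qfac k)⁻¹) *
        (A (n - k) * Polynomial.C (qfac (n - k))⁻¹)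
      = Polynomial.C (qfac n)⁻¹ - Polynomial.X ^ n * Polynomial.C (qfac n)⁻¹ := by
    intro n
    have h := congrArg (PowerSeries.coeff n) hA
    rw [PowerSeries.coeff_mul, Finset.Nat.sum_antidiagonal_eq_sum_range_succ_mk] at h
    simp only [qexpZ, qexpTZ, map_sub, PowerSeries.coeff_mk, PowerSeries.coeff_C_mul] at h
    exact h
  have hA0 : A 0 = 0 := by
    have h := key 0
    simp [qfac] at h
    rcases h with h | h
    · exact absurd h hX1
    · exact h
  -- the recurrence, isolating the k = 0 term
  have hrec : ∀ n : ℕ, (1 - Polynomial.X) * (A n * Polynomial.C (qfac n)⁻¹)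
      = (Polynomial.C (qfac n)⁻¹ - Polynomial.X ^ n * Polynomial.C (qfac n)⁻¹)
        - ∑ k ∈ Finset.range n,
          (Polynomial.X ^ (k + 1) * Polynomial.C (qfac (k + 1))⁻¹ -
              Polynomial.X * Polynomial.C (qfac (k + 1))⁻¹) *
            (A (n - (k + 1)) * Polynomial.C (qfac (n - (k + 1)))⁻¹) := by
    intro n
    have h := key n
    rw [Finset.sum_range_succ'] at h
    have h0 : qfac 0 = 1 := by simp [qfac]
    rw [h0] at h
    simp only [pow_zero, inv_one, map_one, mul_one, Nat.sub_zero, one_mul] at h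
    linear_combination h
  -- degree bound: deg A_n ≤ n - 1 for n ≥ 1
  have hdeg : ∀ n : ℕ, 1 ≤ n → (A n).natDegree + 1 ≤ n := by
    intro n
    induction n using Nat.strong_induction_on with
    | _ n IH =>
      intro hn
      by_cases hAn : A n = 0
      · simp [hAn]; omega
      have h := hrec n
      have h1 : (Polynomial.C (qfac n)⁻¹ -
          Polynomial.X ^ n * Polynomial.C (qfac n)⁻¹ : Polynomial (RatFunc ℚ)).natDegree ≤ n := by
        refine le_trans (Polynomial.natDegree_sub_le _ _) ?_
        have h2 : (Polynomial.X ^ n * Polynomial.C (qfac n)⁻¹ :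
            Polynomial (RatFunc ℚ)).natDegree ≤ n := by
          refine le_trans (Polynomial.natDegree_mul_le) ?_
          simp
        exact max_le (by simp) h2
      have h2 : (∑ k ∈ Finset.range n,
          (Polynomial.X ^ (k + 1) * Polynomial.C (qfac (k + 1))⁻¹ -
              Polynomial.X * Polynomial.C (qfac (k + 1))⁻¹) *
            (A (n - (k + 1)) * Polynomial.C (qfac (n - (k + 1)))⁻¹)).natDegree ≤ n := by
        apply Polynomial.natDegree_sum_le_of_forall_le
        intro k hk
        rw [Finset.mem_range] at hk
        by_cases hk0 : n - (k + 1) = 0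
        · rw [hk0, hA0]
          simp
        · have h3 := IH (n - (k + 1)) (by omega) (by omega)
          refine le_trans (Polynomial.natDegree_mul_le) ?_
          have h4 : (Polynomial.X ^ (k + 1) * Polynomial.C (qfac (k + 1))⁻¹ -
              Polynomial.X * Polynomial.C (qfac (k + 1))⁻¹ :
                Polynomial (RatFunc ℚ)).natDegree ≤ k + 1 := by
            refine le_trans (Polynomial.natDegree_sub_le _ _) ?_
            have h5 : (Polynomial.X ^ (k + 1) * Polynomial.C (qfac (k + 1))⁻¹ :
                Polynomial (RatFunc ℚ)).natDegree ≤ k + 1 :=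
              le_trans (Polynomial.natDegree_mul_le) (by simp)
            have h6 : (Polynomial.X * Polynomial.C (qfac (k + 1))⁻¹ :
                Polynomial (RatFunc ℚ)).natDegree ≤ k + 1 :=
              le_trans (Polynomial.natDegree_mul_le) (by simp)
            exact max_le h5 h6
          have h7 : (A (n - (k + 1)) * Polynomial.C (qfac (n - (k + 1)))⁻¹).natDegree
              ≤ (A (n - (k + 1))).natDegree :=
            le_trans (Polynomial.natDegree_mul_le) (by simp)
          omega
      have hL : ((1 - Polynomial.X) * (A n * Polynomial.C (qfac n)⁻¹)).natDegree
          = 1 + (A n).natDegree := by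
        rw [Polynomial.natDegree_mul hX1 (mul_ne_zero hAn (hc n)),
          Polynomial.natDegree_mul hAn (hc n), hd1X]
        simp
      have h8 : ((1 - Polynomial.X) * (A n * Polynomial.C (qfac n)⁻¹)).natDegree ≤ n := by
        rw [h]
        exact le_trans (Polynomial.natDegree_sub_le _ _) (max_le h1 h2)
      omega
  -- core symmetry: reflect m (A (m+1)) = A (m+1)
  have hsym : ∀ m : ℕ, Polynomial.reflect m (A (m + 1)) = A (m + 1) := by
    intro m
    induction m using Nat.strong_induction_on with
    | _ m IH =>
      have h := hrec (m + 1)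
      have hrefl := congrArg (Polynomial.reflect (m + 1)) h
      -- left side
      have hdegAn : (A (m + 1) * Polynomial.C (qfac (m + 1))⁻¹).natDegree ≤ m := by
        have := hdeg (m + 1) (by omega)
        have h7 : (A (m + 1) * Polynomial.C (qfac (m + 1))⁻¹).natDegree
            ≤ (A (m + 1)).natDegree := le_trans (Polynomial.natDegree_mul_le) (by simp)
        omega
      have r1 : Polynomial.reflect 1 (1 - Polynomial.X : Polynomial (RatFunc ℚ))
          = Polynomial.X - 1 := by
        rw [Polynomial.reflect_sub]
        have ha : Polynomial.reflect 1 (1 : Polynomial (RatFunc ℚ)) = Polynomial.X := by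
          rw [← Polynomial.C_1, Polynomial.reflect_C]
          simp
        have hb : Polynomial.reflect 1 (Polynomial.X : Polynomial (RatFunc ℚ)) = 1 := by
          rw [← pow_one (Polynomial.X : Polynomial (RatFunc ℚ)), Polynomial.reflect_monomial,
            Polynomial.revAt_le le_rfl]
          simp
        rw [ha, hb]
      have e1 : Polynomial.reflect (m + 1)
          ((1 - Polynomial.X) * (A (m + 1) * Polynomial.C (qfac (m + 1))⁻¹))
          = (Polynomial.X - 1) *
            (Polynomial.reflect m (A (m + 1)) * Polynomial.C (qfac (m + 1))⁻¹) := by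
        have hm := Polynomial.reflect_mul (1 - Polynomial.X)
          (A (m + 1) * Polynomial.C (qfac (m + 1))⁻¹) (le_of_eq hd1X) hdegAn
        rw [show (1 : ℕ) + m = m + 1 from Nat.add_comm 1 m] at hm
        rw [hm, r1, mul_comm (A (m + 1)) (Polynomial.C (qfac (m + 1))⁻¹),
          Polynomial.reflect_C_mul,
          mul_comm (Polynomial.C (qfac (m + 1))⁻¹) (Polynomial.reflect m (A (m + 1)))]
      -- right side pieces
      have e2 : Polynomial.reflect (m + 1)
          (Polynomial.C (qfac (m + 1))⁻¹ : Polynomial (RatFunc ℚ))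
          = Polynomial.C (qfac (m + 1))⁻¹ * Polynomial.X ^ (m + 1) :=
        Polynomial.reflect_C _ _
      have e3 : Polynomial.reflect (m + 1)
          (Polynomial.X ^ (m + 1) * Polynomial.C (qfac (m + 1))⁻¹ : Polynomial (RatFunc ℚ))
          = Polynomial.C (qfac (m + 1))⁻¹ := by
        rw [mul_comm, Polynomial.reflect_C_mul, Polynomial.reflect_monomial,
          Polynomial.revAt_le le_rfl]
        simp
      have e4 : ∀ k ∈ Finset.range (m + 1), Polynomial.reflect (m + 1)
          ((Polynomial.X ^ (k + 1) * Polynomial.C (qfac (k + 1))⁻¹ -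
              Polynomial.X * Polynomial.C (qfac (k + 1))⁻¹) *
            (A (m + 1 - (k + 1)) * Polynomial.C (qfac (m + 1 - (k + 1)))⁻¹))
          = -((Polynomial.X ^ (k + 1) * Polynomial.C (qfac (k + 1))⁻¹ -
              Polynomial.X * Polynomial.C (qfac (k + 1))⁻¹) *
            (A (m + 1 - (k + 1)) * Polynomial.C (qfac (m + 1 - (k + 1)))⁻¹)) := by
        intro k hk
        rw [Finset.mem_range] at hk
        by_cases hk0 : m + 1 - (k + 1) = 0
        · rw [hk0, hA0]
          simp
        · obtain ⟨i, hi⟩ : ∃ i, m + 1 - (k + 1) = i + 1 := ⟨m - (k + 1), by omega⟩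
          rw [hi]
          have hF : (Polynomial.X ^ (k + 1) * Polynomial.C (qfac (k + 1))⁻¹ -
              Polynomial.X * Polynomial.C (qfac (k + 1))⁻¹ :
                Polynomial (RatFunc ℚ)).natDegree ≤ k + 1 := by
            refine le_trans (Polynomial.natDegree_sub_le _ _) (max_le ?_ ?_)
            · exact le_trans (Polynomial.natDegree_mul_le) (by simp)
            · exact le_trans (Polynomial.natDegree_mul_le) (by simp)
          have hG : (A (i + 1) * Polynomial.C (qfac (i + 1))⁻¹).natDegree ≤ i + 1 := by
            have := hdeg (i + 1) (by omega)
            have h7 : (A (i + 1) * Polynomial.C (qfac (i + 1))⁻¹).natDegree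
                ≤ (A (i + 1)).natDegree := le_trans (Polynomial.natDegree_mul_le) (by simp)
            omega
          have hsum : m + 1 = (k + 1) + (i + 1) := by omega
          rw [hsum, Polynomial.reflect_mul _ _ hF hG]
          -- first factor
          have f1 : Polynomial.reflect (k + 1)
              (Polynomial.X ^ (k + 1) * Polynomial.C (qfac (k + 1))⁻¹ -
                Polynomial.X * Polynomial.C (qfac (k + 1))⁻¹ : Polynomial (RatFunc ℚ))
              = Polynomial.C (qfac (k + 1))⁻¹ * (1 - Polynomial.X ^ k) := by
            rw [Polynomial.reflect_sub, mul_comm (Polynomial.X ^ (k + 1)),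
              mul_comm (Polynomial.X : Polynomial (RatFunc ℚ)),
              Polynomial.reflect_C_mul, Polynomial.reflect_C_mul,
              Polynomial.reflect_monomial, Polynomial.revAt_le le_rfl,
              ← pow_one (Polynomial.X : Polynomial (RatFunc ℚ)), Polynomial.reflect_monomial,
              Polynomial.revAt_le (by omega : 1 ≤ k + 1)]
            simp [mul_sub]
          -- second factor
          have hdegAi : (A (i + 1)).natDegree ≤ i := by
            have := hdeg (i + 1) (by omega); omega
          have f2 : Polynomial.reflect (i + 1)
              (A (i + 1) * Polynomial.C (qfac (i + 1))⁻¹)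
              = Polynomial.X * A (i + 1) * Polynomial.C (qfac (i + 1))⁻¹ := by
            rw [mul_comm (A (i + 1)), Polynomial.reflect_C_mul,
              my_reflect_succ _ hdegAi, IH i (by omega)]
            ring
          rw [f1, f2]
          ring
      have e5 : Polynomial.reflect (m + 1)
          ((Polynomial.C (qfac (m + 1))⁻¹ -
              Polynomial.X ^ (m + 1) * Polynomial.C (qfac (m + 1))⁻¹)
            - ∑ k ∈ Finset.range (m + 1),
              (Polynomial.X ^ (k + 1) * Polynomial.C (qfac (k + 1))⁻¹ -
                  Polynomial.X * Polynomial.C (qfac (k + 1))⁻¹) *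
                (A (m + 1 - (k + 1)) * Polynomial.C (qfac (m + 1 - (k + 1)))⁻¹))
          = (Polynomial.C (qfac (m + 1))⁻¹ * Polynomial.X ^ (m + 1) -
              Polynomial.C (qfac (m + 1))⁻¹)
            + ∑ k ∈ Finset.range (m + 1),
              (Polynomial.X ^ (k + 1) * Polynomial.C (qfac (k + 1))⁻¹ -
                  Polynomial.X * Polynomial.C (qfac (k + 1))⁻¹) *
                (A (m + 1 - (k + 1)) * Polynomial.C (qfac (m + 1 - (k + 1)))⁻¹) := by
        rw [Polynomial.reflect_sub, Polynomial.reflect_sub, e2, e3, my_reflect_sum,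
          Finset.sum_congr rfl e4, Finset.sum_neg_distrib]
        ring
      rw [e1, e5] at hrefl
      -- combine hrefl with rec to cancel
      have hz : ((Polynomial.X - 1) * Polynomial.C (qfac (m + 1))⁻¹) *
          (Polynomial.reflect m (A (m + 1)) - A (m + 1)) = 0 := by
        linear_combination hrefl + h
      rcases mul_eq_zero.mp hz with h0 | h0
      · rcases mul_eq_zero.mp h0 with h0 | h0
        · exact absurd h0 hX1'
        · exact absurd h0 (hc (m + 1))
      · exact sub_eq_zero.mp h0
  intro n hn
  obtain ⟨m, rfl⟩ : ∃ m, n = m + 1 := ⟨n - 1, by omega⟩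
  have hdm : (A (m + 1)).natDegree ≤ m := by
    have := hdeg (m + 1) (by omega); omega
  rw [my_reflect_succ _ hdm, hsym m]
end

section
/- Write A_n(t,q) = ∑_k A_{n,k}(q) t^k for the q-Eulerian polynomials. Then A_{n,k}(q) = A_{n,n-k-1}(q) for all n ≥ 1 and 0 ≤ k ≤ n−1. -/
open Polynomial PowerSeries

namespace QEulerAux

open LaurentPolynomial

noncomputable abbrev Rq := RatFunc ℚ
noncomputable abbrev L := LaurentPolynomial Rq

noncomputable instance : IsDomain L := NoZeroDivisors.to_isDomain _

theorem qfac_ne (n : ℕ) : qfac n ≠ 0 := by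
  unfold qfac
  apply Finset.prod_ne_zero_iff.mpr
  intro i _ h
  have h1 : qq ^ (i + 1) = 1 := by linear_combination -h
  have h2 : (Polynomial.X : Polynomial ℚ) ^ (i + 1) = 1 := by
    apply RatFunc.algebraMap_injective ℚ
    simpa [qq, RatFunc.algebraMap_X] using h1
  have h3 := congrArg Polynomial.natDegree h2
  simp [Polynomial.natDegree_X_pow] at h3

theorem qfacinv_ne (n : ℕ) : (qfac n)⁻¹ ≠ 0 := inv_ne_zero (qfac_ne n)

theorem C_ne (a : Rq) (h : a ≠ 0) : (LaurentPolynomial.C a : L) ≠ 0 := by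
  intro h0
  apply h
  have h1 : (LaurentPolynomial.C a : L).coeff 0 = (0 : L).coeff 0 := by rw [h0]
  rw [← single_eq_C, AddMonoidAlgebra.coeff_single, Finsupp.single_apply] at h1
  simpa using h1

theorem toLaurent_coeff (p : Polynomial Rq) (k : ℕ) :
    (Polynomial.toLaurent p).coeff (k : ℤ) = p.coeff k := by
  rw [LaurentPolynomial.coeff_toLaurent]
  exact Finsupp.mapDomain_apply Nat.castEmbedding.injective p.toFinsupp.coeff k

theorem T_mul_apply (f : L) (a b : ℤ) : (T a * f : L).coeff b = f.coeff (-a + b) := by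
  have h : (T a : L) = AddMonoidAlgebra.single a 1 := rfl
  rw [h, AddMonoidAlgebra.coeff_single_mul_apply]
  simp

/-- The substitution `t ↦ 1/t` composed with `Polynomial → Laurent`. -/
noncomputable def φ : Polynomial Rq →+* L :=
  RingHom.comp ((invert : L ≃ₐ[Rq] L) : L →+* L) Polynomial.toLaurent

theorem φ_C (a : Rq) : φ (Polynomial.C a) = LaurentPolynomial.C a := by
  simp [φ, Polynomial.toLaurent_C]

theorem φ_X_pow (n : ℕ) : φ (Polynomial.X ^ n) = T (-(n : ℤ)) := by
  simp [φ, Polynomial.toLaurent_X_pow]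

/-- Key identity: `toLaurent (A n) = T (n-1) * invert (toLaurent (A n))`. -/
theorem key (A : ℕ → Polynomial (RatFunc ℚ))
    (hA : (qexpTZ - PowerSeries.C (Polynomial.X : Polynomial (RatFunc ℚ)) * qexpZ) *
        PowerSeries.mk (fun n => A n * Polynomial.C (qfac n)⁻¹) = qexpZ - qexpTZ)
    (n : ℕ) :
    Polynomial.toLaurent (A n) = T ((n : ℤ) - 1) * invert (Polynomial.toLaurent (A n)) := by
  classical
  set c : ℕ → Rq := fun n => (qfac n)⁻¹ with hc
  set eZ' : PowerSeries L := PowerSeries.mk fun n => LaurentPolynomial.C (c n) with heZ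
  set eTZ' : PowerSeries L := PowerSeries.mk fun n => T (n : ℤ) * LaurentPolynomial.C (c n) with heTZ
  -- direct image under toLaurent
  have hm1 : PowerSeries.map (Polynomial.toLaurent : Polynomial Rq →+* L) qexpZ = eZ' := by
    ext k
    simp [qexpZ, Polynomial.toLaurent_C, heZ, hc]
  have hm2 : PowerSeries.map (Polynomial.toLaurent : Polynomial Rq →+* L) qexpTZ = eTZ' := by
    rw [heTZ]
    refine PowerSeries.ext fun k => ?_
    simp only [PowerSeries.coeff_map, PowerSeries.coeff_mk, qexpTZ, map_mul,
      Polynomial.toLaurent_C, Polynomial.toLaurent_X_pow]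
    rfl
  have h3 : (eTZ' - PowerSeries.C (T 1 : L) * eZ') *
      PowerSeries.mk (fun m => Polynomial.toLaurent (A m) * LaurentPolynomial.C (c m)) = eZ' - eTZ' := by
    have h := congrArg (PowerSeries.map (Polynomial.toLaurent : Polynomial Rq →+* L)) hA
    simp only [map_mul, map_sub, PowerSeries.map_C, Polynomial.toLaurent_X] at h
    rw [hm1, hm2] at h
    convert h using 3
    ext k
    simp [Polynomial.toLaurent_C, hc]
  -- image under φ then rescale (T 1)
  have r1 : PowerSeries.rescale (T 1 : L) (PowerSeries.map φ qexpZ) = eTZ' := by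
    ext k
    simp [qexpZ, PowerSeries.coeff_rescale, φ_C, T_pow, heTZ, hc]
  have r2 : PowerSeries.rescale (T 1 : L) (PowerSeries.map φ qexpTZ) = eZ' := by
    ext k
    simp only [qexpTZ, PowerSeries.coeff_rescale, PowerSeries.coeff_map, PowerSeries.coeff_mk,
      map_mul, φ_C, φ_X_pow, T_pow, heZ]
    rw [← mul_assoc, ← T_add]
    simp [hc]
  have r3 : PowerSeries.rescale (T 1 : L)
      (PowerSeries.map φ (PowerSeries.C (Polynomial.X : Polynomial Rq))) =
      PowerSeries.C (T (-1) : L) := by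
    rw [PowerSeries.map_C]
    ext k
    rcases Nat.eq_zero_or_pos k with hk | hk
    · subst hk
      simp [PowerSeries.coeff_rescale, φ, Polynomial.toLaurent_X]
    · simp [PowerSeries.coeff_rescale, PowerSeries.coeff_C, Nat.pos_iff_ne_zero.mp hk]
  have r4 : PowerSeries.rescale (T 1 : L)
      (PowerSeries.map φ (PowerSeries.mk (fun m => A m * Polynomial.C (c m)))) =
      PowerSeries.mk (fun m => T (m : ℤ) * invert (Polynomial.toLaurent (A m)) * LaurentPolynomial.C (c m)) := by
    ext k
    simp only [PowerSeries.coeff_rescale, PowerSeries.coeff_map, PowerSeries.coeff_mk, map_mul,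
      φ_C, T_pow, mul_one]
    rw [← mul_assoc]
    rfl
  have h2 : (eZ' - PowerSeries.C (T (-1) : L) * eTZ') *
      PowerSeries.mk (fun m => T (m : ℤ) * invert (Polynomial.toLaurent (A m)) * LaurentPolynomial.C (c m)) =
      eTZ' - eZ' := by
    have h := congrArg (fun F => PowerSeries.rescale (T 1 : L) (PowerSeries.map φ F)) hA
    simp only [map_mul, map_sub] at h
    rw [r1, r2, r3, r4] at h
    exact h
  -- combine
  have e1 : PowerSeries.C (T 1 : L) * PowerSeries.C (T (-1) : L) = 1 := by
    rw [← map_mul, ← T_add]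
    simp
  set M : PowerSeries L :=
    PowerSeries.mk (fun m => T (m : ℤ) * invert (Polynomial.toLaurent (A m)) * LaurentPolynomial.C (c m)) with hM
  have h2' : (eTZ' - PowerSeries.C (T 1 : L) * eZ') * M =
      PowerSeries.C (T 1 : L) * (eZ' - eTZ') := by
    linear_combination (-(PowerSeries.C (T 1 : L))) * h2 - eTZ' * M * e1
  have h3' : (eTZ' - PowerSeries.C (T 1 : L) * eZ') *
      (PowerSeries.C (T 1 : L) * PowerSeries.mk (fun m => Polynomial.toLaurent (A m) * LaurentPolynomial.C (c m))) =
      PowerSeries.C (T 1 : L) * (eZ' - eTZ') := by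
    linear_combination (PowerSeries.C (T 1 : L)) * h3
  have hfac : (eTZ' - PowerSeries.C (T 1 : L) * eZ') ≠ 0 := by
    intro h0
    have h1 := congrArg (PowerSeries.constantCoeff) h0
    simp only [map_sub, map_mul, PowerSeries.constantCoeff_C, heTZ, heZ,
      PowerSeries.constantCoeff_mk] at h1
    have hc0 : c 0 = 1 := by simp [hc, qfac]
    rw [hc0] at h1
    simp only [Nat.cast_zero, T_zero, map_one, mul_one, one_mul] at h1
    rw [map_zero] at h1
    have h4 : (T (0 : ℤ) : L) = T 1 := by rw [T_zero]; linear_combination h1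
    have h5 := congrArg (fun f : L => f.coeff 1) h4
    simp only [T_apply] at h5
    norm_num at h5
  have hMeq : M = PowerSeries.C (T 1 : L) *
      PowerSeries.mk (fun m => Polynomial.toLaurent (A m) * LaurentPolynomial.C (c m)) :=
    mul_left_cancel₀ hfac (h2'.trans h3'.symm)
  have hcoeff := congrArg (PowerSeries.coeff n) hMeq
  rw [hM] at hcoeff
  simp only [PowerSeries.coeff_mk, PowerSeries.coeff_C_mul] at hcoeff
  -- hcoeff : T n * invert (ι (A n)) * LaurentPolynomial.C (c n) = T 1 * (ι (A n) * LaurentPolynomial.C (c n))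
  have hcn : (LaurentPolynomial.C (c n) : L) ≠ 0 := C_ne _ (qfacinv_ne n)
  have h6 : T (n : ℤ) * invert (Polynomial.toLaurent (A n)) =
      T 1 * Polynomial.toLaurent (A n) :=
    mul_right_cancel₀ hcn (by rw [hcoeff]; ring)
  have h7 := congrArg (fun x => T (-1 : ℤ) * x) h6
  simp only [← mul_assoc, ← T_add] at h7
  rw [show (-1 + (n : ℤ)) = (n : ℤ) - 1 by ring, show (-1 + (1 : ℤ)) = 0 by ring, T_zero,
    one_mul] at h7
  exact h7.symm

end QEulerAux

/-- With `A n = A_n(t,q)` the q-Eulerian polynomials (defined by the generating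
function, in cross-multiplied form) and `A_{n,k}(q)` the coefficient of `t^k`,
we have `A_{n,k}(q) = A_{n,n-k-1}(q)` for `n ≥ 1` and `0 ≤ k ≤ n-1`. -/
theorem qEulerian_coeff_symmetry (A : ℕ → Polynomial (RatFunc ℚ))
    (hA : (qexpTZ - PowerSeries.C (Polynomial.X : Polynomial (RatFunc ℚ)) * qexpZ) *
        PowerSeries.mk (fun n => A n * Polynomial.C (qfac n)⁻¹) = qexpZ - qexpTZ) :
    ∀ n k : ℕ, 1 ≤ n → k ≤ n - 1 → (A n).coeff k = (A n).coeff (n - k - 1) := by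
  intro n k hn hk
  have h := QEulerAux.key A hA n
  have h1 := congrArg (fun f : QEulerAux.L => f.coeff (k : ℤ)) h
  rw [QEulerAux.toLaurent_coeff, QEulerAux.T_mul_apply, LaurentPolynomial.invert_apply] at h1
  have h2 : (-(((n : ℤ)) - 1) + (k : ℤ)) = -(((n - k - 1 : ℕ) : ℤ)) := by
    omega
  rw [h2, neg_neg, QEulerAux.toLaurent_coeff] at h1
  exact h1
end

section
/- For all integers n ≥ 0 and i, the q-Eulerian numbers satisfy ∑_k [n choose k]_q · A_{n-k, i-k}(q) − ∑_k [n choose k]_q · A_{n-k, i-1}(q) = 1 if i = 0 and n ≠ 0, −1 if i = n and i ≠ 0, and 0 otherwise. -/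
open Polynomial PowerSeries

/-- The q-binomial coefficient `[n choose k]_q ∈ ℚ(q)`. -/
noncomputable def qbinom (n k : ℕ) : RatFunc ℚ :=
  if k ≤ n then qfac n / (qfac (n - k) * qfac k) else 0


lemma key (A : ℕ → Polynomial (RatFunc ℚ))
    (hA : (qexpTZ - PowerSeries.C (R := Polynomial (RatFunc ℚ)) Polynomial.X * qexpZ) *
        PowerSeries.mk (fun n => A n * Polynomial.C (qfac n)⁻¹) = qexpZ - qexpTZ)
    (n : ℕ) :
    ∑ k ∈ Finset.range (n+1), Polynomial.C (qbinom n k) * A (n - k) * Polynomial.X ^ k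
    - ∑ k ∈ Finset.range (n+1), Polynomial.C (qbinom n k) * A (n - k) * Polynomial.X
    = 1 - Polynomial.X ^ n := by
  have h := congrArg (PowerSeries.coeff n) hA
  rw [PowerSeries.coeff_mul, Finset.Nat.sum_antidiagonal_eq_sum_range_succ_mk] at h
  simp only [map_sub, PowerSeries.coeff_C_mul, qexpZ, qexpTZ, PowerSeries.coeff_mk] at h
  have h2 := congrArg (· * Polynomial.C (qfac n)) h
  simp only [Finset.sum_mul, sub_mul] at h2
  rw [← Finset.sum_sub_distrib]
  calc _ = ∑ k ∈ Finset.range (n+1),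
        (Polynomial.X ^ k * Polynomial.C (qfac k)⁻¹ -
          Polynomial.X * Polynomial.C (qfac k)⁻¹) *
          (A (n - k) * Polynomial.C (qfac (n-k))⁻¹) * Polynomial.C (qfac n) := by
        apply Finset.sum_congr rfl
        intro k hk
        rw [Finset.mem_range] at hk
        have hkn : k ≤ n := Nat.lt_succ_iff.mp hk
        have hqb : Polynomial.C (qbinom n k) =
            Polynomial.C (qfac n) * Polynomial.C (qfac k)⁻¹ * Polynomial.C (qfac (n-k))⁻¹ := by
          rw [← map_mul, ← map_mul]
          congr 1
          rw [qbinom, if_pos hkn]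
          field_simp
        rw [hqb]; ring
    _ = _ := by
        simp only [sub_mul]
        rw [h2]
        have : (Polynomial.C (qfac n)⁻¹ : Polynomial (RatFunc ℚ)) * Polynomial.C (qfac n) = 1 := by
          rw [← map_mul, inv_mul_cancel₀ (qfac_ne_zero n), map_one]
        rw [this, mul_assoc, this, mul_one]

/-- `∑_k [n choose k]_q A_{n-k,i-k}(q) − ∑_k [n choose k]_q A_{n-k,i-1}(q)`
equals `1` if `i = 0 ≠ n`, `−1` if `i = n ≠ 0`, and `0` otherwise.  Here
`A_{m,j}(q)` is the coefficient of `t^j` in the q-Eulerian polynomial `A m`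
(interpreted as `0` for negative index `j`), and the sums over `k ≥ 0`
reduce to `0 ≤ k ≤ n` since the q-binomial vanishes beyond. -/
theorem qEulerian_recurrence (A : ℕ → Polynomial (RatFunc ℚ))
    (hA : (qexpTZ - PowerSeries.C (R := Polynomial (RatFunc ℚ)) Polynomial.X * qexpZ) *
        PowerSeries.mk (fun n => A n * Polynomial.C (qfac n)⁻¹) = qexpZ - qexpTZ) :
    ∀ n i : ℕ,
      (∑ k ∈ Finset.range (n + 1),
          if k ≤ i then qbinom n k * (A (n - k)).coeff (i - k) else 0) -
      (∑ k ∈ Finset.range (n + 1),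
          if 1 ≤ i then qbinom n k * (A (n - k)).coeff (i - 1) else 0) =
      if i = 0 ∧ n ≠ 0 then 1 else if i = n ∧ i ≠ 0 then -1 else 0 := by
  
  intro n i
  have h := key A hA n
  rw [show ∑ k ∈ Finset.range (n+1),
        Polynomial.C (qbinom n k) * A (n-k) * Polynomial.X
      = ∑ k ∈ Finset.range (n+1),
        Polynomial.C (qbinom n k) * A (n-k) * Polynomial.X ^ 1 by simp] at h
  have h2 := congrArg (fun p => Polynomial.coeff p i) h
  simp only [Polynomial.coeff_sub, Polynomial.finset_sum_coeff, Polynomial.coeff_one,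
    Polynomial.coeff_X_pow, Polynomial.coeff_mul_X_pow', Polynomial.coeff_C_mul] at h2
  rw [h2]
  split_ifs <;> simp_all
end

section
/- Every permutation π of {1,...,n} admits a unique hook factorization π = p·τ_1·τ_2⋯τ_r (as concatenation of words), where p is an increasing word (possibly empty) and each τ_i is a hook. -/
/-- An increasing word (possibly empty). -/
def IsIncr (w : List ℕ) : Prop := w.Chain' (· < ·)

/-- A hook: a word `x₁x₂⋯x_m` of distinct letters with `x₁ > x₂` and
`x₂ < x₃ < ⋯ < x_m` (in particular `m ≥ 2`). -/
def IsHook (w : List ℕ) : Prop :=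
  w.Nodup ∧ ∃ x y rest, w = x :: y :: rest ∧ y < x ∧ (y :: rest).Chain' (· < ·)

/-- The number of inversions of a word: pairs of positions `i < j` with `w_i > w_j`. -/
def invList : List ℕ → ℕ
  | [] => 0
  | x :: xs => xs.countP (fun y => decide (y < x)) + invList xs

/-- If a word with distinct letters is not increasing, it ends with a last descent
followed by an increasing run. -/
lemma exists_last_descent : ∀ (w : List ℕ), w.Nodup → ¬ w.Chain' (· < ·) →
    ∃ a x y s, w = a ++ x :: y :: s ∧ y < x ∧ (y :: s).Chain' (· < ·) := by
  intro w
  induction w with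
  | nil => intro _ hc; exact absurd List.isChain_nil hc
  | cons z w' ih =>
    intro hnd hc
    by_cases hc' : w'.Chain' (· < ·)
    · cases w' with
      | nil => exact absurd (List.isChain_singleton z) hc
      | cons y s =>
        refine ⟨[], z, y, s, rfl, ?_, hc'⟩
        have hzy : ¬ z < y := fun h => hc (List.isChain_cons_cons.mpr ⟨h, hc'⟩)
        have hne : z ≠ y := by
          intro h; subst h
          exact (List.nodup_cons.mp hnd).1 (List.mem_cons_self)
        omega
    · obtain ⟨a, x, y, s, heq, hlt, hch⟩ := ih (List.nodup_cons.mp hnd).2 hc'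
      exact ⟨z :: a, x, y, s, by simp [heq], hlt, hch⟩

lemma hook_suffix_aux {x1 y1 x2 y2 : ℕ} {s1 s2 : List ℕ}
    (h : (x1 :: y1 :: s1) <:+ (x2 :: y2 :: s2)) (h1 : y1 < x1)
    (c2 : (y2 :: s2).Chain' (· < ·)) : x1 :: y1 :: s1 = x2 :: y2 :: s2 := by
  rcases List.suffix_cons_iff.mp h with heq | hsuf
  · exact heq
  · have : (x1 :: y1 :: s1).Chain' (· < ·) := c2.suffix hsuf
    have : x1 < y1 := (List.isChain_cons_cons.mp this).1
    omega

/-- Uniqueness of the decomposition "prefix ++ (descent followed by increasing run to the end)". -/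
lemma last_hook_unique {a1 a2 : List ℕ} {x1 x2 y1 y2 : ℕ} {s1 s2 : List ℕ}
    (h : a1 ++ x1 :: y1 :: s1 = a2 ++ x2 :: y2 :: s2)
    (h1 : y1 < x1) (h2 : y2 < x2)
    (c1 : (y1 :: s1).Chain' (· < ·)) (c2 : (y2 :: s2).Chain' (· < ·)) :
    a1 = a2 ∧ x1 = x2 ∧ y1 = y2 ∧ s1 = s2 := by
  have hs1 : (x1 :: y1 :: s1) <:+ (a2 ++ x2 :: y2 :: s2) := h ▸ ⟨a1, rfl⟩
  have hs2 : (x2 :: y2 :: s2) <:+ (a2 ++ x2 :: y2 :: s2) := ⟨a2, rfl⟩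
  have heq : x1 :: y1 :: s1 = x2 :: y2 :: s2 := by
    rcases List.suffix_or_suffix_of_suffix hs1 hs2 with hle | hle
    · exact hook_suffix_aux hle h1 c2
    · exact (hook_suffix_aux hle h2 c1).symm
  obtain ⟨hx, hy, hs⟩ : x1 = x2 ∧ y1 = y2 ∧ s1 = s2 := by
    simpa using heq
  subst hx; subst hy; subst hs
  exact ⟨List.append_cancel_right h, rfl, rfl, rfl⟩

lemma key_s8 : ∀ (N : ℕ) (w : List ℕ), w.length ≤ N → w.Nodup →
    ∃! pt : List ℕ × List (List ℕ),
      IsIncr pt.1 ∧ (∀ τ ∈ pt.2, IsHook τ) ∧ pt.1 ++ pt.2.flatten = w := by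
  intro N
  induction N with
  | zero =>
    intro w hlen _
    have hw : w = [] := List.length_eq_zero_iff.mp (Nat.le_zero.mp hlen)
    subst hw
    refine ⟨([], []), ⟨List.isChain_nil, by simp, by simp⟩, ?_⟩
    rintro ⟨p, ts⟩ ⟨hp, hts, heq⟩
    simp only at heq
    obtain ⟨hp0, hf0⟩ := List.append_eq_nil_iff.mp heq
    have hts0 : ts = [] := by
      cases ts with
      | nil => rfl
      | cons τ ts' =>
        obtain ⟨_, x, y, r, hτ, _, _⟩ := hts τ (List.mem_cons_self)
        simp [hτ] at hf0
    simp [hp0, hts0]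
  | succ N ih =>
    intro w hlen hnd
    by_cases hc : w.Chain' (· < ·)
    · refine ⟨(w, []), ⟨hc, by simp, by simp⟩, ?_⟩
      rintro ⟨p, ts⟩ ⟨hp, hts, heq⟩
      have hts0 : ts = [] := by
        cases ts with
        | nil => rfl
        | cons τ ts' =>
          obtain ⟨_, x, y, r, hτ, hyx, _⟩ := hts τ (List.mem_cons_self)
          have hinf : τ <:+: w := by
            refine ⟨p, (ts').flatten, ?_⟩
            simpa using heq
          have hcτ : τ.Chain' (· < ·) := hc.infix hinf
          rw [hτ] at hcτ
          have : x < y := (List.isChain_cons_cons.mp hcτ).1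
          omega
      subst hts0
      simp only [List.flatten_nil, List.append_nil] at heq
      simp [heq]
    · obtain ⟨a, x, y, s, heqw, hlt, hch⟩ := exists_last_descent w hnd hc
      have hlena : a.length ≤ N := by
        have := congrArg List.length heqw
        simp at this
        omega
      have hnda : a.Nodup := by
        rw [heqw] at hnd
        exact hnd.of_append_left
      obtain ⟨⟨p, ts⟩, ⟨hp, hts, heqa⟩, huniq⟩ := ih a hlena hnda
      have hτhook : IsHook (x :: y :: s) := by
        refine ⟨?_, x, y, s, rfl, hlt, hch⟩
        rw [heqw] at hnd
        exact ((List.sublist_append_right a _).nodup hnd)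
      refine ⟨(p, ts ++ [x :: y :: s]), ⟨hp, ?_, ?_⟩, ?_⟩
      · intro τ hτ
        rcases List.mem_append.mp hτ with h | h
        · exact hts τ h
        · simp at h; subst h; exact hτhook
      · rw [heqw, ← heqa]
        simp
      · rintro ⟨p', ts'⟩ ⟨hp', hts', heq'⟩
        rcases ts'.eq_nil_or_concat with rfl | ⟨ts'', τ', rfl⟩
        · simp only [List.flatten_nil, List.append_nil] at heq'
          exact absurd (heq' ▸ hp' : w.Chain' (· < ·)) hc
        · obtain ⟨_, x', y', r', hτ', hlt', hch'⟩ :=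
            hts' τ' (by simp [List.concat_eq_append])
          have heq2 : (p' ++ ts''.flatten) ++ (x' :: y' :: r') = a ++ (x :: y :: s) := by
            rw [← heqw, ← heq']
            simp [List.concat_eq_append, hτ', List.append_assoc]
          obtain ⟨ha, hx, hy, hs⟩ := last_hook_unique heq2 hlt' hlt hch' hch
          have hpair : (p', ts'') = (p, ts) := by
            refine huniq (p', ts'') ⟨hp', ?_, ha⟩
            intro τ hτ
            exact hts' τ (by simp [List.concat_eq_append, hτ])
          have hp2 : p' = p := congrArg Prod.fst hpair
          have hts2 : ts'' = ts := congrArg Prod.snd hpair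
          subst hx; subst hy; subst hs
          simp [List.concat_eq_append, hp2, hts2, hτ']

/-- Every permutation word of `{1,…,n}` admits a unique hook factorization
`w = p · τ₁ ⋯ τ_r` with `p` increasing (possibly empty) and each `τᵢ` a hook. -/
theorem hook_factorization_existsUnique (n : ℕ) (w : List ℕ)
    (hw : w.Perm (List.range' 1 n)) :
    ∃! pt : List ℕ × List (List ℕ),
      IsIncr pt.1 ∧ (∀ τ ∈ pt.2, IsHook τ) ∧ pt.1 ++ pt.2.flatten = w := by
  have hnd : w.Nodup := hw.nodup_iff.mpr List.nodup_range'
  exact key_s8 w.length w le_rfl hnd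
end

section
/- There exists an involution π ↦ σ on the symmetric group S_n such that lec(π) = n − 1 − lec(σ) and inv(π) − lec(π) = inv(σ) − lec(σ), for every n ≥ 1. -/
open Classical in
/-- The hook factorization of a word (chosen via choice; it exists and is unique
for permutation words). -/
noncomputable def hookFact (w : List ℕ) : List ℕ × List (List ℕ) :=
  if h : ∃ pt : List ℕ × List (List ℕ),
      IsIncr pt.1 ∧ (∀ τ ∈ pt.2, IsHook τ) ∧ pt.1 ++ pt.2.flatten = w
  then h.choose else ([], [])

/-- `lec(w)`: the sum of the inversion numbers of the hooks in the hook
factorization of `w`. -/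
noncomputable def lec (w : List ℕ) : ℕ := ((hookFact w).2.map invList).sum

/- ### Basic lemmas on `invList` -/

@[simp] lemma invList_nil : invList [] = 0 := rfl
lemma invList_cons (x : ℕ) (xs : List ℕ) :
    invList (x :: xs) = xs.countP (fun y => decide (y < x)) + invList xs := rfl

def xcount (a b : List ℕ) : ℕ := (a.map (fun x => b.countP (fun y => decide (y < x)))).sum

lemma invList_append (a b : List ℕ) :
    invList (a ++ b) = invList a + invList b + xcount a b := by
  induction a with
  | nil => simp [xcount]
  | cons x a ih =>
    simp only [List.cons_append, invList_cons, ih, List.countP_append, xcount, List.map_cons,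
      List.sum_cons]
    ring

lemma xcount_perm {a a' b b' : List ℕ} (ha : a.Perm a') (hb : b.Perm b') :
    xcount a b = xcount a' b' := by
  unfold xcount
  have : (fun x => b.countP (fun y => decide (y < x))) =
      (fun x => b'.countP (fun y => decide (y < x))) :=
    funext fun x => hb.countP_eq _
  rw [this]
  exact (ha.map _).sum_eq

lemma invList_of_chain' {l : List ℕ} (h : l.Chain' (· < ·)) : invList l = 0 := by
  induction l with
  | nil => rfl
  | cons x xs ih =>
    have hp := List.isChain_iff_pairwise.mp h
    rw [invList_cons, ih h.tail, List.countP_eq_zero.mpr, Nat.add_zero]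
    intro y hy
    have : x < y := (List.pairwise_cons.mp hp).1 y hy
    simpa using Nat.not_lt.mpr this.le

lemma perm_flatten {us vs : List (List ℕ)} (h : List.Forall₂ (·.Perm ·) us vs) :
    us.flatten.Perm vs.flatten := by
  induction h with
  | nil => rfl
  | cons h _ ih => exact h.append ih

lemma key_cross {us vs : List (List ℕ)} (h : List.Forall₂ (·.Perm ·) us vs) :
    invList us.flatten + (vs.map invList).sum = invList vs.flatten + (us.map invList).sum := by
  induction h with
  | nil => rfl
  | cons hab hrest ih =>
    rename_i a b as bs
    simp only [List.flatten_cons, List.map_cons, List.sum_cons, invList_append]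
    have hx : xcount a as.flatten = xcount b bs.flatten :=
      xcount_perm hab (perm_flatten hrest)
    omega

lemma forall₂_map_self {R : List ℕ → List ℕ → Prop} {f : List ℕ → List ℕ} {l : List (List ℕ)}
    (h : ∀ x ∈ l, R x (f x)) : List.Forall₂ R l (l.map f) := by
  induction l with
  | nil => exact List.Forall₂.nil
  | cons a l ih =>
    exact List.Forall₂.cons (h a (List.mem_cons_self))
      (ih fun x hx => h x (List.mem_cons_of_mem _ hx))

lemma sum_map_add_of {α : Type} (l : List α) (f g h : α → ℕ)
    (H : ∀ x ∈ l, f x + g x = h x) :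
    (l.map f).sum + (l.map g).sum = (l.map h).sum := by
  induction l with
  | nil => rfl
  | cons a l ih =>
    simp only [List.map_cons, List.sum_cons]
    have h1 := H a (List.mem_cons_self)
    have h2 := ih fun x hx => H x (List.mem_cons_of_mem _ hx)
    omega

/- ### The computable hook factorization -/

def HookW (τ : List ℕ) : Prop :=
  ∃ x y r, τ = x :: y :: r ∧ y < x ∧ (y :: r).Chain' (· < ·)

def factStep (x : ℕ) : List ℕ × List (List ℕ) → List ℕ × List (List ℕ)
  | ([], hs) => ([x], hs)
  | (y :: p, hs) => if y < x then ([], (x :: y :: p) :: hs) else (x :: y :: p, hs)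

def fact (w : List ℕ) : List ℕ × List (List ℕ) := w.foldr factStep ([], [])

noncomputable def lecC (w : List ℕ) : ℕ := ((fact w).2.map invList).sum

@[simp] lemma fact_nil : fact [] = ([], []) := rfl
lemma fact_cons (x : ℕ) (xs : List ℕ) : fact (x :: xs) = factStep x (fact xs) := rfl

lemma fact_prepend (p : List ℕ) (hp : p.Chain' (· < ·)) (u : List ℕ)
    (hs : List (List ℕ)) (hu : fact u = ([], hs)) : fact (p ++ u) = (p, hs) := by
  induction p with
  | nil => simpa using hu
  | cons a p ih =>
    have h' : fact (p ++ u) = (p, hs) := ih hp.tail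
    rw [List.cons_append, fact_cons, h']
    cases p with
    | nil => rfl
    | cons b p' =>
      have hab : a < b := List.isChain_cons_cons.mp hp |>.1
      simp [factStep, Nat.not_lt.mpr hab.le]

lemma fact_eq (ts : List (List ℕ)) (hts : ∀ τ ∈ ts, HookW τ) :
    ∀ p : List ℕ, p.Chain' (· < ·) → fact (p ++ ts.flatten) = (p, ts) := by
  induction ts with
  | nil =>
    intro p hp
    exact fact_prepend p hp [] [] rfl
  | cons τ ts ih =>
    intro p hp
    obtain ⟨x, y, r, hτ, hyx, hch⟩ := hts τ (List.mem_cons_self)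
    have hflat : fact (List.flatten (τ :: ts)) = ([], τ :: ts) := by
      have h1 : fact ((y :: r) ++ ts.flatten) = (y :: r, ts) :=
        ih (fun σ hσ => hts σ (List.mem_cons_of_mem _ hσ)) (y :: r) hch
      have : List.flatten (τ :: ts) = x :: ((y :: r) ++ ts.flatten) := by
        simp [hτ]
      rw [this, fact_cons, h1]
      simp [factStep, hyx, hτ]
    exact fact_prepend p hp _ _ hflat

lemma fact_spec (w : List ℕ) (hw : w.Nodup) :
    (fact w).1.Chain' (· < ·) ∧ (∀ τ ∈ (fact w).2, IsHook τ) ∧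
      (fact w).1 ++ (fact w).2.flatten = w := by
  induction w with
  | nil => simp [List.Chain']
  | cons x xs ih =>
    obtain ⟨h1, h2, h3⟩ := ih hw.of_cons
    have hxxs : x ∉ xs := (List.nodup_cons.mp hw).1
    rcases hq : fact xs with ⟨q, hs⟩
    rw [hq] at h1 h2 h3
    simp only at h1 h2 h3
    rw [fact_cons, hq]
    cases q with
    | nil =>
      refine ⟨by simp [factStep, List.Chain'], by simpa [factStep] using h2, ?_⟩
      simp only [factStep]
      simpa using h3
    | cons y q' =>
      have hymem : y ∈ xs := by
        rw [← h3]; exact List.mem_append_left _ (List.mem_cons_self)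
      by_cases hyx : y < x
      · refine ⟨by simp [factStep, hyx, List.Chain'], ?_, ?_⟩
        · intro τ hτ
          simp only [factStep, if_pos hyx] at hτ
          rcases List.mem_cons.mp hτ with h | h
          · subst h
            refine ⟨?_, x, y, q', rfl, hyx, h1⟩
            have hnq : (y :: q').Nodup := by
              have := h3 ▸ hw.of_cons
              exact this.of_append_left
            refine List.nodup_cons.mpr ⟨?_, hnq⟩
            intro hx
            exact hxxs (by rw [← h3]; exact List.mem_append_left _ hx)
          · exact h2 τ h
        · simp only [factStep, if_pos hyx]
          simpa using h3
      · have hxy : x < y := by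
          rcases Nat.lt_trichotomy x y with h | h | h
          · exact h
          · exact absurd (h ▸ hymem) hxxs
          · exact absurd h hyx
        refine ⟨?_, ?_, ?_⟩
        · simp only [factStep, if_neg hyx]
          exact List.isChain_cons_cons.mpr ⟨hxy, h1⟩
        · intro τ hτ
          simp only [factStep, if_neg hyx] at hτ
          exact h2 τ hτ
        · simp only [factStep, if_neg hyx]
          simpa using h3

lemma hookFact_eq_fact (w : List ℕ) (hw : w.Nodup) : hookFact w = fact w := by
  obtain ⟨h1, h2, h3⟩ := fact_spec w hw
  have hex : ∃ pt : List ℕ × List (List ℕ),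
      IsIncr pt.1 ∧ (∀ τ ∈ pt.2, IsHook τ) ∧ pt.1 ++ pt.2.flatten = w :=
    ⟨fact w, h1, h2, h3⟩
  rw [hookFact, dif_pos hex]
  obtain ⟨hc1, hc2, hc3⟩ := hex.choose_spec
  have := fact_eq hex.choose.2 (fun τ hτ => (hc2 τ hτ).2) hex.choose.1 hc1
  rw [hc3] at this
  rw [this]

lemma lec_eq_lecC (w : List ℕ) (hw : w.Nodup) : lec w = lecC w := by
  rw [lec, lecC, hookFact_eq_fact w hw]

/- ### Hooks with a distinguished head position -/

def mkHook (s : List ℕ) (j : ℕ) : List ℕ :=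
  match s.drop j with
  | [] => s
  | x :: r => x :: (s.take j ++ r)

def encJ : List ℕ → ℕ
  | [] => 0
  | x :: t => t.countP (fun y => decide (y < x))

def encS : List ℕ → List ℕ
  | [] => []
  | x :: t => t.take (t.countP (fun y => decide (y < x)))
      ++ x :: t.drop (t.countP (fun y => decide (y < x)))

lemma mkHook_spec (s : List ℕ) (j : ℕ) (hs : s.Chain' (· < ·)) (h1 : 1 ≤ j)
    (h2 : j < s.length) :
    HookW (mkHook s j) ∧ (mkHook s j).Perm s ∧ invList (mkHook s j) = j ∧
      encJ (mkHook s j) = j ∧ encS (mkHook s j) = s := by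
  rcases hd : s.drop j with _ | ⟨x, r⟩
  · exfalso
    have := List.length_drop (i := j) (l := s)
    rw [hd] at this
    simp at this
    omega
  set A := s.take j with hA
  have hseq : A ++ x :: r = s := by rw [hA, ← hd, List.take_append_drop]
  have hlenA : A.length = j := by
    rw [hA, List.length_take]; omega
  have hpw : List.Pairwise (· < ·) s := List.isChain_iff_pairwise.mp hs
  rw [← hseq] at hpw
  obtain ⟨pwA, pwXR, hAll⟩ := List.pairwise_append.mp hpw
  have hxr : ∀ b ∈ r, x < b := (List.pairwise_cons.mp pwXR).1
  have pwR : List.Pairwise (· < ·) r := (List.pairwise_cons.mp pwXR).2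
  have hAx : ∀ a ∈ A, a < x := fun a ha => hAll a ha x (List.mem_cons_self)
  have hmk : mkHook s j = x :: (A ++ r) := by rw [mkHook, hd]
  have hAne : A ≠ [] := by
    intro hA0; rw [hA0] at hlenA; simp at hlenA; omega
  obtain ⟨a₀, A', hAnil⟩ := List.exists_cons_of_ne_nil hAne
  have pwAR : List.Pairwise (· < ·) (A ++ r) :=
    List.pairwise_append.mpr ⟨pwA, pwR, fun a ha b hb => (hAx a ha).trans (hxr b hb)⟩
  have hchAR : (A ++ r).Chain' (· < ·) := List.isChain_iff_pairwise.mpr pwAR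
  have hcount : (A ++ r).countP (fun y => decide (y < x)) = j := by
    rw [List.countP_append]
    have hCA : A.countP (fun y => decide (y < x)) = A.length :=
      List.countP_eq_length.mpr (fun a ha => by simpa using hAx a ha)
    have hCr : r.countP (fun y => decide (y < x)) = 0 :=
      List.countP_eq_zero.mpr (fun b hb => by simpa using Nat.not_lt.mpr (hxr b hb).le)
    omega
  refine ⟨?_, ?_, ?_, ?_, ?_⟩
  · rw [hmk]
    refine ⟨x, a₀, A' ++ r, by rw [hAnil]; simp,
      hAx a₀ (by rw [hAnil]; exact List.mem_cons_self), ?_⟩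
    rw [← List.cons_append, ← hAnil]; exact hchAR
  · rw [hmk, ← hseq]
    exact List.perm_middle.symm
  · rw [hmk, invList_cons, invList_of_chain' hchAR, hcount]; omega
  · rw [hmk, encJ, hcount]
  · rw [hmk, encS, hcount]
    rw [List.take_left' hlenA, List.drop_left' hlenA]
    exact hseq

lemma countP_split (x : ℕ) (t : List ℕ) (ht : t.Chain' (· < ·)) (hx : x ∉ t) :
    (∀ z ∈ t.take (t.countP (fun y => decide (y < x))), z < x) ∧
      (∀ z ∈ t.drop (t.countP (fun y => decide (y < x))), x < z) := by
  induction t with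
  | nil => simp
  | cons y t' ih =>
    have hpw := List.isChain_iff_pairwise.mp ht
    have hyt' : ∀ z ∈ t', y < z := (List.pairwise_cons.mp hpw).1
    by_cases hyx : y < x
    · have hc : (y :: t').countP (fun y => decide (y < x)) =
          t'.countP (fun y => decide (y < x)) + 1 := by
        rw [List.countP_cons]; simp [hyx]
      obtain ⟨ih1, ih2⟩ := ih ht.tail (fun h => hx (List.mem_cons_of_mem _ h))
      rw [hc]
      constructor
      · intro z hz
        rw [List.take_succ_cons] at hz
        rcases List.mem_cons.mp hz with h | h
        · exact h ▸ hyx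
        · exact ih1 z h
      · intro z hz
        rw [List.drop_succ_cons] at hz
        exact ih2 z hz
    · have hxy : x < y := by
        rcases Nat.lt_trichotomy x y with h | h | h
        · exact h
        · exact absurd (h ▸ (List.mem_cons_self (a := y) (l := t'))) hx
        · exact absurd h hyx
      have hc : (y :: t').countP (fun y => decide (y < x)) = 0 := by
        refine List.countP_eq_zero.mpr ?_
        intro z hz
        rcases List.mem_cons.mp hz with h | h
        · subst h; simpa using hyx
        · simpa using Nat.not_lt.mpr (hxy.trans (hyt' z h)).le
      rw [hc]
      refine ⟨by simp, ?_⟩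
      intro z hz
      rw [List.drop_zero] at hz
      rcases List.mem_cons.mp hz with h | h
      · exact h ▸ hxy
      · exact hxy.trans (hyt' z h)

lemma enc_spec (τ : List ℕ) (h : HookW τ) (hnd : τ.Nodup) :
    (encS τ).Chain' (· < ·) ∧ 1 ≤ encJ τ ∧ encJ τ < (encS τ).length ∧
      mkHook (encS τ) (encJ τ) = τ ∧ (encS τ).length = τ.length ∧ (encS τ).Perm τ ∧
      invList τ = encJ τ := by
  obtain ⟨x, y, r, hτ, hyx, hch⟩ := h
  subst hτ
  set t := y :: r with htdef
  set j := t.countP (fun y => decide (y < x)) with hjdef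
  have hxt : x ∉ t := (List.nodup_cons.mp hnd).1
  have hencJ : encJ (x :: t) = j := rfl
  have hencS : encS (x :: t) = t.take j ++ x :: t.drop j := rfl
  have hj1 : 1 ≤ j := by
    rw [hjdef, htdef, List.countP_cons]
    simp [hyx]
  have hjle : j ≤ t.length := by rw [hjdef]; exact List.countP_le_length
  have hlentake : (t.take j).length = j := by rw [List.length_take]; omega
  obtain ⟨hsp1, hsp2⟩ := countP_split x t hch hxt
  have hpwt : List.Pairwise (· < ·) t := List.isChain_iff_pairwise.mp hch
  have pwTake : List.Pairwise (· < ·) (t.take j) := hpwt.sublist (List.take_sublist _ _)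
  have pwDrop : List.Pairwise (· < ·) (t.drop j) := hpwt.sublist (List.drop_sublist _ _)
  have hpwS : List.Pairwise (· < ·) (t.take j ++ x :: t.drop j) := by
    refine List.pairwise_append.mpr ⟨pwTake, List.pairwise_cons.mpr ⟨hsp2, pwDrop⟩, ?_⟩
    intro a ha b hb
    rcases List.mem_cons.mp hb with h | h
    · exact h ▸ hsp1 a ha
    · exact (hsp1 a ha).trans (hsp2 b h)
  refine ⟨?_, hj1, ?_, ?_, ?_, ?_, ?_⟩
  · rw [hencS]; exact List.isChain_iff_pairwise.mpr hpwS
  · rw [hencJ, hencS]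
    simp only [List.length_append, List.length_cons]
    omega
  · rw [hencJ, hencS, mkHook]
    rw [List.drop_left' hlentake]
    show x :: (List.take j ((List.take j t) ++ x :: List.drop j t) ++ List.drop j t) = x :: t
    rw [List.take_left' hlentake, List.take_append_drop]
  · rw [hencS]
    simp only [List.length_append, List.length_cons, List.length_take, List.length_drop]
    omega
  · rw [hencS]
    exact List.perm_middle.trans (by rw [List.take_append_drop])
  · rw [invList_cons, invList_of_chain' hch]; omega

/- ### The two mutually inverse maps -/

def decD (d : ℕ × List ℕ) : List ℕ := mkHook d.2 d.1
def encD (τ : List ℕ) : ℕ × List ℕ := (encJ τ, encS τ)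
def cD (d : ℕ × List ℕ) : ℕ × List ℕ := (d.2.length - d.1, d.2)

def chi : List ℕ × List (ℕ × List ℕ) → List ℕ × List (ℕ × List ℕ)
  | ([], []) => ([], [])
  | ([], (j, s) :: rest) => if j = 1 then (s, rest) else ([], (j - 1, s) :: rest)
  | ([a], ds) => ([a], ds)
  | (a :: b :: p, ds) => ([], ((a :: b :: p).length - 1, a :: b :: p) :: ds)

def chi' : List ℕ × List (ℕ × List ℕ) → List ℕ × List (ℕ × List ℕ)
  | ([], []) => ([], [])
  | ([], (j, s) :: rest) => if j = s.length - 1 then (s, rest) else ([], (j + 1, s) :: rest)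
  | ([a], ds) => ([a], ds)
  | (a :: b :: p, ds) => ([], (1, a :: b :: p) :: ds)

lemma chi_cons (j : ℕ) (s : List ℕ) (rest : List (ℕ × List ℕ)) :
    chi ([], (j, s) :: rest) = if j = 1 then (s, rest) else ([], (j - 1, s) :: rest) := rfl
lemma chi_one (a : ℕ) (ds : List (ℕ × List ℕ)) : chi ([a], ds) = ([a], ds) := rfl
lemma chi_two (a b : ℕ) (p : List ℕ) (ds : List (ℕ × List ℕ)) :
    chi (a :: b :: p, ds) = ([], ((a :: b :: p).length - 1, a :: b :: p) :: ds) := rfl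
lemma chi'_cons (j : ℕ) (s : List ℕ) (rest : List (ℕ × List ℕ)) :
    chi' ([], (j, s) :: rest) =
      if j = s.length - 1 then (s, rest) else ([], (j + 1, s) :: rest) := rfl
lemma chi'_one (a : ℕ) (ds : List (ℕ × List ℕ)) : chi' ([a], ds) = ([a], ds) := rfl
lemma chi'_two (a b : ℕ) (p : List ℕ) (ds : List (ℕ × List ℕ)) :
    chi' (a :: b :: p, ds) = ([], (1, a :: b :: p) :: ds) := rfl

def assemble (pd : List ℕ × List (ℕ × List ℕ)) : List ℕ := pd.1 ++ (pd.2.map decD).flatten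

lemma assemble_mk (q : List ℕ) (ds : List (ℕ × List ℕ)) :
    assemble (q, ds) = q ++ (ds.map decD).flatten := rfl

def gmap (w : List ℕ) : List ℕ :=
  assemble (chi ((fact w).1, ((fact w).2.map encD).map cD))

def gmap' (w : List ℕ) : List ℕ :=
  assemble ((chi' ((fact w).1, (fact w).2.map encD)).1,
            (chi' ((fact w).1, (fact w).2.map encD)).2.map cD)

def ValidE (ds : List (ℕ × List ℕ)) : Prop :=
  ∀ d ∈ ds, d.2.Chain' (· < ·) ∧ 1 ≤ d.1 ∧ d.1 < d.2.length

lemma assemble_fact (q : List ℕ) (ds : List (ℕ × List ℕ)) (hq : q.Chain' (· < ·))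
    (h : ValidE ds) : fact (assemble (q, ds)) = (q, ds.map decD) := by
  rw [assemble_mk]
  refine fact_eq _ ?_ _ hq
  intro τ hτ
  obtain ⟨d, hd, rfl⟩ := List.mem_map.mp hτ
  obtain ⟨hc, h1, h2⟩ := h d hd
  exact (mkHook_spec d.2 d.1 hc h1 h2).1

lemma encD_decD (ds : List (ℕ × List ℕ)) (h : ValidE ds) :
    (ds.map decD).map encD = ds := by
  rw [List.map_map]
  have h' : ∀ d ∈ ds, (encD ∘ decD) d = d := by
    intro d hd
    obtain ⟨hc, h1, h2⟩ := h d hd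
    have hm := mkHook_spec d.2 d.1 hc h1 h2
    show (encJ (mkHook d.2 d.1), encS (mkHook d.2 d.1)) = d
    rw [hm.2.2.2.1, hm.2.2.2.2]
  rw [List.map_congr_left h']; exact List.map_id _

lemma gmap_assemble (q : List ℕ) (ds : List (ℕ × List ℕ)) (hq : q.Chain' (· < ·))
    (h : ValidE ds) :
    gmap (assemble (q, ds)) = assemble (chi (q, ds.map cD)) := by
  rw [gmap, assemble_fact q ds hq h]
  dsimp only
  rw [encD_decD ds h]

lemma gmap'_assemble (q : List ℕ) (ds : List (ℕ × List ℕ)) (hq : q.Chain' (· < ·))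
    (h : ValidE ds) :
    gmap' (assemble (q, ds)) =
      assemble ((chi' (q, ds)).1, (chi' (q, ds)).2.map cD) := by
  rw [gmap', assemble_fact q ds hq h]
  dsimp only
  rw [encD_decD ds h]

/- ### facts about lists of hooks -/

lemma hsFacts (hs : List (List ℕ)) (hhs : ∀ τ ∈ hs, IsHook τ) :
    (∀ τ ∈ hs, HookW (decD (cD (encD τ))) ∧ (decD (cD (encD τ))).Perm τ ∧
      invList (decD (cD (encD τ))) = τ.length - invList τ ∧
      encD (decD (cD (encD τ))) = cD (encD τ)) ∧
    ValidE ((hs.map encD).map cD) ∧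
    ((hs.map encD).map cD).map decD = hs.map (fun τ => decD (cD (encD τ))) ∧
    ((hs.map encD).map cD).map cD = hs.map encD ∧
    (hs.map encD).map decD = hs ∧
    ValidE (hs.map encD) ∧
    List.Forall₂ (·.Perm ·) hs (hs.map (fun τ => decD (cD (encD τ)))) ∧
    ((hs.map (fun τ => decD (cD (encD τ)))).map invList).sum
        = (hs.map (fun τ => τ.length - invList τ)).sum ∧
    (hs.map invList).sum + (hs.map (fun τ => τ.length - invList τ)).sum
        = (hs.map List.length).sum := by
  have henc : ∀ τ ∈ hs, (encS τ).Chain' (· < ·) ∧ 1 ≤ encJ τ ∧ encJ τ < (encS τ).length ∧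
      mkHook (encS τ) (encJ τ) = τ ∧ (encS τ).length = τ.length ∧ (encS τ).Perm τ ∧
      invList τ = encJ τ :=
    fun τ hτ => enc_spec τ (hhs τ hτ).2 (hhs τ hτ).1
  have hf' : ∀ τ ∈ hs, HookW (decD (cD (encD τ))) ∧ (decD (cD (encD τ))).Perm τ ∧
      invList (decD (cD (encD τ))) = τ.length - invList τ ∧
      encD (decD (cD (encD τ))) = cD (encD τ) := by
    intro τ hτ
    obtain ⟨c1, c2, c3, c4, c5, c6, c7⟩ := henc τ hτ
    have hm := mkHook_spec (encS τ) ((encS τ).length - encJ τ) c1 (by omega) (by omega)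
    refine ⟨hm.1, hm.2.1.trans c6, ?_, ?_⟩
    · show invList (mkHook (encS τ) ((encS τ).length - encJ τ)) = _
      rw [hm.2.2.1, c5, c7]
    · show (encJ (mkHook (encS τ) ((encS τ).length - encJ τ)),
        encS (mkHook (encS τ) ((encS τ).length - encJ τ))) = cD (encD τ)
      rw [hm.2.2.2.1, hm.2.2.2.2]
      rfl
  refine ⟨hf', ?_, ?_, ?_, ?_, ?_, ?_, ?_, ?_⟩
  · intro d hd
    rw [List.map_map] at hd
    obtain ⟨τ, hτ, rfl⟩ := List.mem_map.mp hd
    obtain ⟨c1, c2, c3, _⟩ := henc τ hτ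
    refine ⟨c1, ?_, ?_⟩
    · show 1 ≤ (encS τ).length - encJ τ; omega
    · show (encS τ).length - encJ τ < (encS τ).length; omega
  · simp [List.map_map, Function.comp]
  · rw [List.map_map, List.map_map]
    refine List.map_congr_left ?_
    intro τ hτ
    obtain ⟨c1, c2, c3, _⟩ := henc τ hτ
    show ((encS τ).length - ((encS τ).length - encJ τ), encS τ) = (encJ τ, encS τ)
    have : (encS τ).length - ((encS τ).length - encJ τ) = encJ τ := by omega
    rw [this]
  · rw [List.map_map]
    have h' : ∀ τ ∈ hs, (decD ∘ encD) τ = τ := fun τ hτ => (henc τ hτ).2.2.2.1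
    rw [List.map_congr_left h']; exact List.map_id _
  · intro d hd
    obtain ⟨τ, hτ, rfl⟩ := List.mem_map.mp hd
    obtain ⟨c1, c2, c3, _⟩ := henc τ hτ
    obtain ⟨hnd, x, y, r, hτ', hyx, hch⟩ := hhs τ hτ
    refine ⟨?_, c2, c3⟩
    show (encS τ).Chain' (· < ·)
    exact c1
  · exact forall₂_map_self (fun τ hτ => ((hf' τ hτ).2.1).symm)
  · rw [List.map_map]
    exact congrArg List.sum (List.map_congr_left (fun τ hτ => (hf' τ hτ).2.2.1))
  · refine sum_map_add_of hs _ _ _ ?_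
    intro τ hτ
    obtain ⟨c1, c2, c3, c4, c5, c6, c7⟩ := henc τ hτ
    omega

lemma list_two {l : List ℕ} (h : 2 ≤ l.length) : ∃ a b t, l = a :: b :: t := by
  rcases l with _ | ⟨a, l1⟩
  · simp at h
  rcases l1 with _ | ⟨b, t⟩
  · simp at h
  exact ⟨a, b, t, rfl⟩

lemma chi_big (q : List ℕ) (h : 2 ≤ q.length) (ds : List (ℕ × List ℕ)) :
    chi (q, ds) = ([], (q.length - 1, q) :: ds) := by
  obtain ⟨a, b, t, rfl⟩ := list_two h
  rfl

lemma chi'_big (q : List ℕ) (h : 2 ≤ q.length) (ds : List (ℕ × List ℕ)) :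
    chi' (q, ds) = ([], (1, q) :: ds) := by
  obtain ⟨a, b, t, rfl⟩ := list_two h
  rfl

lemma stats_of (w gw : List ℕ) (us vs : List (List ℕ))
    (hF : List.Forall₂ (·.Perm ·) us vs)
    (hw : us.flatten = w) (hgw : vs.flatten = gw)
    (hu : (us.map invList).sum = lecC w) (hv : (vs.map invList).sum = lecC gw) :
    gw.Perm w ∧ invList w + lecC gw = invList gw + lecC w := by
  constructor
  · rw [← hw, ← hgw]; exact (perm_flatten hF).symm
  · have := key_cross hF
    rw [hw, hgw, hu, hv] at this
    omega

lemma invList_singleton (a : ℕ) : invList [a] = 0 := by simp [invList_cons]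

theorem gmap_spec (w : List ℕ) (hw : w.Nodup) (hne : w ≠ []) :
    (gmap w).Perm w ∧ lecC w + lecC (gmap w) = w.length - 1 ∧
      invList w + lecC (gmap w) = invList (gmap w) + lecC w ∧ gmap' (gmap w) = w := by
  obtain ⟨hp, hhs, hcat⟩ := fact_spec w hw
  rcases hfw : fact w with ⟨p, hs⟩
  rw [hfw] at hp hhs hcat
  dsimp only at hp hhs hcat
  obtain ⟨hf', hvE, hmapdec, hcdcd, hdecenc, hvEe, hFa, hVsum, hSsum⟩ := hsFacts hs hhs
  have hsumJ : lecC w = (hs.map invList).sum := by rw [lecC, hfw]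
  have hlenw : w.length = p.length + (hs.map List.length).sum := by
    rw [← hcat, List.length_append, List.length_flatten]
  have hgw : gmap w = assemble (chi (p, (hs.map encD).map cD)) := by
    unfold gmap; rw [hfw]
  rcases p with _ | ⟨a, p1⟩
  · -- p = []
    rcases hs with _ | ⟨τ, hs2⟩
    · exact absurd (by rw [← hcat]; rfl) hne
    have hτIH : IsHook τ := hhs τ (List.mem_cons_self)
    obtain ⟨c1, c2, c3, c4, c5, c6, c7⟩ := enc_spec τ hτIH.2 hτIH.1
    have hhs2 : ∀ σ ∈ hs2, IsHook σ := fun σ hσ => hhs σ (List.mem_cons_of_mem _ hσ)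
    obtain ⟨hf2, hvE2, hmapdec2, hcdcd2, hdecenc2, hvEe2, hFa2, hVsum2, hSsum2⟩ :=
      hsFacts hs2 hhs2
    have hds : (((τ :: hs2).map encD).map cD)
        = ((encS τ).length - encJ τ, encS τ) :: ((hs2.map encD).map cD) := rfl
    rw [hds] at hgw
    have hcatw : τ ++ hs2.flatten = w := by simpa using hcat
    have hlenw2 : w.length = τ.length + (hs2.map List.length).sum := by
      simpa using hlenw
    have hsumJ2 : lecC w = invList τ + (hs2.map invList).sum := by
      simpa using hsumJ
    by_cases hj1 : (encS τ).length - encJ τ = 1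
    · -- first hook dissolves into the new increasing prefix
      rw [chi_cons, if_pos hj1] at hgw
      have hfactg := assemble_fact (encS τ) ((hs2.map encD).map cD) c1 hvE2
      have hgw2 : gmap w = encS τ ++ (hs2.map (fun σ => decD (cD (encD σ)))).flatten := by
        rw [hgw, assemble_mk, hmapdec2]
      have hlecg : lecC (gmap w) = (hs2.map (fun σ => σ.length - invList σ)).sum := by
        rw [lecC, hgw, hfactg]
        dsimp only
        rw [hmapdec2]
        exact hVsum2
      have hstats := stats_of w (gmap w) (τ :: hs2)
          (encS τ :: hs2.map (fun σ => decD (cD (encD σ))))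
          (List.Forall₂.cons c6.symm hFa2)
          (by simpa using hcatw)
          (by rw [hgw2]; simp)
          (by rw [hsumJ2]; simp)
          (by rw [hlecg, List.map_cons, List.sum_cons, invList_of_chain' c1, hVsum2,
            Nat.zero_add])
      refine ⟨hstats.1, ?_, hstats.2, ?_⟩
      · rw [hsumJ2, hlecg]
        have : encJ τ = τ.length - 1 := by omega
        omega
      · rw [hgw, gmap'_assemble (encS τ) ((hs2.map encD).map cD) c1 hvE2,
          chi'_big (encS τ) (by omega) _]
        dsimp only
        simp only [assemble_mk, List.map_cons, List.flatten_cons, List.nil_append]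
        rw [hcdcd2]
        have hD : decD (cD (1, encS τ)) = τ := by
          show mkHook (encS τ) ((encS τ).length - 1) = τ
          have : (encS τ).length - 1 = encJ τ := by omega
          rw [this, c4]
        show decD (cD (1, encS τ)) ++ ((hs2.map encD).map decD).flatten = w
        rw [hD, hdecenc2, hcatw]
    · -- first hook keeps a smaller head
      rw [chi_cons, if_neg hj1] at hgw
      have hmk := mkHook_spec (encS τ) ((encS τ).length - encJ τ - 1) c1
        (by omega) (by omega)
      have hvE' : ValidE (((encS τ).length - encJ τ - 1, encS τ)
          :: (hs2.map encD).map cD) := by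
        intro d hd
        rcases List.mem_cons.mp hd with rfl | hd
        · refine ⟨c1, ?_, ?_⟩
          · show 1 ≤ (encS τ).length - encJ τ - 1
            omega
          · show (encS τ).length - encJ τ - 1 < (encS τ).length
            omega
        · exact hvE2 d hd
      have hfactg := assemble_fact [] _ List.isChain_nil hvE'
      have hgw2 : gmap w = mkHook (encS τ) ((encS τ).length - encJ τ - 1)
          ++ (hs2.map (fun σ => decD (cD (encD σ)))).flatten := by
        rw [hgw, assemble_mk]
        simp only [List.map_cons, List.flatten_cons, List.nil_append, hmapdec2]
        rfl
      have hlecg : lecC (gmap w) = ((encS τ).length - encJ τ - 1)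
          + (hs2.map (fun σ => σ.length - invList σ)).sum := by
        rw [lecC, hgw, hfactg]
        dsimp only
        simp only [List.map_cons, List.sum_cons]
        rw [hmapdec2, hVsum2]
        congr 1
        exact hmk.2.2.1
      have hstats := stats_of w (gmap w) (τ :: hs2)
          (mkHook (encS τ) ((encS τ).length - encJ τ - 1)
            :: hs2.map (fun σ => decD (cD (encD σ))))
          (List.Forall₂.cons ((hmk.2.1).trans c6).symm hFa2)
          (by simpa using hcatw)
          (by rw [hgw2]; simp)
          (by rw [hsumJ2]; simp)
          (by rw [hlecg, List.map_cons, List.sum_cons, hmk.2.2.1, hVsum2])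
      refine ⟨hstats.1, ?_, hstats.2, ?_⟩
      · rw [hsumJ2, hlecg]
        omega
      · rw [hgw, gmap'_assemble [] _ List.isChain_nil hvE', chi'_cons,
          if_neg (by omega)]
        dsimp only
        simp only [assemble_mk, List.map_cons, List.flatten_cons, List.nil_append]
        rw [hcdcd2]
        have h1 : (encS τ).length - encJ τ - 1 + 1 = (encS τ).length - encJ τ := by omega
        have hD : decD (cD ((encS τ).length - encJ τ - 1 + 1, encS τ)) = τ := by
          show mkHook (encS τ) ((encS τ).length - ((encS τ).length - encJ τ - 1 + 1)) = τ
          have : (encS τ).length - ((encS τ).length - encJ τ - 1 + 1) = encJ τ := by omega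
          rw [this, c4]
        show decD (cD ((encS τ).length - encJ τ - 1 + 1, encS τ))
            ++ ((hs2.map encD).map decD).flatten = w
        rw [hD, hdecenc2, hcatw]
  rcases p1 with _ | ⟨b, p2⟩
  · -- p = [a]
    rw [chi_one] at hgw
    have hfactg := assemble_fact [a] _ (List.isChain_singleton a) hvE
    have hgw2 : gmap w = [a] ++ (hs.map (fun σ => decD (cD (encD σ)))).flatten := by
      rw [hgw, assemble_mk, hmapdec]
    have hlecg : lecC (gmap w) = (hs.map (fun σ => σ.length - invList σ)).sum := by
      rw [lecC, hgw, hfactg]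
      dsimp only
      rw [hmapdec, hVsum]
    have hstats := stats_of w (gmap w) ([a] :: hs)
        ([a] :: hs.map (fun σ => decD (cD (encD σ))))
        (List.Forall₂.cons (List.Perm.refl _) hFa)
        (by simpa using hcat)
        (by rw [hgw2]; simp)
        (by rw [hsumJ]; simp [invList_singleton])
        (by rw [hlecg, List.map_cons, List.sum_cons, invList_singleton, hVsum,
          Nat.zero_add])
    refine ⟨hstats.1, ?_, hstats.2, ?_⟩
    · rw [hsumJ, hlecg]
      simp only [List.length_cons, List.length_nil] at hlenw
      omega
    · rw [hgw, gmap'_assemble [a] _ (List.isChain_singleton a) hvE, chi'_one]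
      dsimp only
      rw [assemble_mk, hcdcd, hdecenc]
      simpa using hcat
  · -- p = a :: b :: p2
    rw [chi_big _ (by simp) _] at hgw
    have hL : 2 ≤ (a :: b :: p2).length := by simp
    have hmkP := mkHook_spec (a :: b :: p2) ((a :: b :: p2).length - 1) hp
      (by simp only [List.length_cons]; omega) (by simp only [List.length_cons]; omega)
    have hvE' : ValidE (((a :: b :: p2).length - 1, a :: b :: p2)
        :: (hs.map encD).map cD) := by
      intro d hd
      rcases List.mem_cons.mp hd with rfl | hd
      · refine ⟨hp, ?_, ?_⟩
        · show 1 ≤ (a :: b :: p2).length - 1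
          simp only [List.length_cons]; omega
        · show (a :: b :: p2).length - 1 < (a :: b :: p2).length
          simp only [List.length_cons]; omega
      · exact hvE d hd
    have hfactg := assemble_fact [] _ List.isChain_nil hvE'
    have hgw2 : gmap w = mkHook (a :: b :: p2) ((a :: b :: p2).length - 1)
        ++ (hs.map (fun σ => decD (cD (encD σ)))).flatten := by
      rw [hgw, assemble_mk]
      simp only [List.map_cons, List.flatten_cons, List.nil_append, hmapdec]
      rfl
    have hlecg : lecC (gmap w) = ((a :: b :: p2).length - 1)
        + (hs.map (fun σ => σ.length - invList σ)).sum := by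
      rw [lecC, hgw, hfactg]
      dsimp only
      simp only [List.map_cons, List.sum_cons]
      rw [hmapdec, hVsum]
      congr 1
      exact hmkP.2.2.1
    have hstats := stats_of w (gmap w) ((a :: b :: p2) :: hs)
        (mkHook (a :: b :: p2) ((a :: b :: p2).length - 1)
          :: hs.map (fun σ => decD (cD (encD σ))))
        (List.Forall₂.cons (hmkP.2.1).symm hFa)
        (by simpa using hcat)
        (by rw [hgw2]; simp)
        (by rw [hsumJ]; simp [invList_of_chain' hp])
        (by rw [hlecg, List.map_cons, List.sum_cons, hmkP.2.2.1, hVsum])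
    refine ⟨hstats.1, ?_, hstats.2, ?_⟩
    · rw [hsumJ, hlecg]
      omega
    · rw [hgw, gmap'_assemble [] _ List.isChain_nil hvE', chi'_cons, if_pos rfl]
      dsimp only
      rw [assemble_mk, hcdcd, hdecenc]
      exact hcat

lemma perm_of (w gw : List ℕ) (us vs : List (List ℕ))
    (hF : List.Forall₂ (·.Perm ·) us vs)
    (hw : us.flatten = w) (hgw : vs.flatten = gw) : gw.Perm w := by
  rw [← hw, ← hgw]; exact (perm_flatten hF).symm

theorem gmap'_spec (w : List ℕ) (hw : w.Nodup) (hne : w ≠ []) :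
    (gmap' w).Perm w ∧ gmap (gmap' w) = w := by
  obtain ⟨hp, hhs, hcat⟩ := fact_spec w hw
  rcases hfw : fact w with ⟨p, hs⟩
  rw [hfw] at hp hhs hcat
  dsimp only at hp hhs hcat
  obtain ⟨hf', hvE, hmapdec, hcdcd, hdecenc, hvEe, hFa, hVsum, hSsum⟩ := hsFacts hs hhs
  have hgw : gmap' w = assemble ((chi' (p, hs.map encD)).1,
      (chi' (p, hs.map encD)).2.map cD) := by
    unfold gmap'; rw [hfw]
  rcases p with _ | ⟨a, p1⟩
  · rcases hs with _ | ⟨τ, hs2⟩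
    · exact absurd (by rw [← hcat]; rfl) hne
    have hτIH : IsHook τ := hhs τ (List.mem_cons_self)
    obtain ⟨c1, c2, c3, c4, c5, c6, c7⟩ := enc_spec τ hτIH.2 hτIH.1
    have hhs2 : ∀ σ ∈ hs2, IsHook σ := fun σ hσ => hhs σ (List.mem_cons_of_mem _ hσ)
    obtain ⟨hf2, hvE2, hmapdec2, hcdcd2, hdecenc2, hvEe2, hFa2, hVsum2, hSsum2⟩ :=
      hsFacts hs2 hhs2
    have hcatw : τ ++ hs2.flatten = w := by simpa using hcat
    have hds : (τ :: hs2).map encD = (encJ τ, encS τ) :: hs2.map encD := rfl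
    rw [hds] at hgw
    by_cases hjm : encJ τ = (encS τ).length - 1
    · rw [chi'_cons, if_pos hjm] at hgw
      have hgwe : gmap' w = assemble (encS τ, (hs2.map encD).map cD) := by
        rw [hgw]
      have hgw2 : gmap' w = encS τ ++ (hs2.map (fun σ => decD (cD (encD σ)))).flatten := by
        rw [hgwe, assemble_mk, hmapdec2]
      constructor
      · exact perm_of w (gmap' w) (τ :: hs2)
          (encS τ :: hs2.map (fun σ => decD (cD (encD σ))))
          (List.Forall₂.cons c6.symm hFa2)
          (by simpa using hcatw) (by rw [hgw2]; simp)
      · rw [hgwe, gmap_assemble (encS τ) _ c1 hvE2, hcdcd2,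
          chi_big (encS τ) (by omega) _, assemble_mk]
        simp only [List.map_cons, List.flatten_cons, List.nil_append]
        have hD : decD ((encS τ).length - 1, encS τ) = τ := by
          show mkHook (encS τ) ((encS τ).length - 1) = τ
          rw [← hjm]; exact c4
        rw [hD, hdecenc2, hcatw]
    · rw [chi'_cons, if_neg hjm] at hgw
      have hgwe : gmap' w = assemble ([],
          ((encS τ).length - (encJ τ + 1), encS τ) :: (hs2.map encD).map cD) := by
        rw [hgw]; rfl
      have hmk := mkHook_spec (encS τ) ((encS τ).length - (encJ τ + 1)) c1
        (by omega) (by omega)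
      have hvE' : ValidE (((encS τ).length - (encJ τ + 1), encS τ)
          :: (hs2.map encD).map cD) := by
        intro d hd
        rcases List.mem_cons.mp hd with rfl | hd
        · refine ⟨c1, ?_, ?_⟩
          · show 1 ≤ (encS τ).length - (encJ τ + 1)
            omega
          · show (encS τ).length - (encJ τ + 1) < (encS τ).length
            omega
        · exact hvE2 d hd
      have hgw2 : gmap' w = mkHook (encS τ) ((encS τ).length - (encJ τ + 1))
          ++ (hs2.map (fun σ => decD (cD (encD σ)))).flatten := by
        rw [hgwe, assemble_mk]
        simp only [List.map_cons, List.flatten_cons, List.nil_append, hmapdec2]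
        rfl
      constructor
      · exact perm_of w (gmap' w) (τ :: hs2)
          (mkHook (encS τ) ((encS τ).length - (encJ τ + 1))
            :: hs2.map (fun σ => decD (cD (encD σ))))
          (List.Forall₂.cons ((hmk.2.1).trans c6).symm hFa2)
          (by simpa using hcatw) (by rw [hgw2]; simp)
      · rw [hgwe, gmap_assemble [] _ List.isChain_nil hvE', List.map_cons, hcdcd2]
        show assemble (chi ([], ((encS τ).length - ((encS τ).length - (encJ τ + 1)),
          encS τ) :: hs2.map encD)) = w
        have h1 : (encS τ).length - ((encS τ).length - (encJ τ + 1)) = encJ τ + 1 := by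
          omega
        rw [h1, chi_cons, if_neg (by omega), assemble_mk]
        simp only [List.map_cons, List.flatten_cons, List.nil_append]
        have h2 : encJ τ + 1 - 1 = encJ τ := rfl
        rw [h2]
        have hD : decD (encJ τ, encS τ) = τ := c4
        rw [hD, hdecenc2, hcatw]
  rcases p1 with _ | ⟨b, p2⟩
  · -- p = [a]
    rw [chi'_one] at hgw
    have hgwe : gmap' w = assemble ([a], (hs.map encD).map cD) := by rw [hgw]
    have hgw2 : gmap' w = [a] ++ (hs.map (fun σ => decD (cD (encD σ)))).flatten := by
      rw [hgwe, assemble_mk, hmapdec]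
    constructor
    · exact perm_of w (gmap' w) ([a] :: hs)
        ([a] :: hs.map (fun σ => decD (cD (encD σ))))
        (List.Forall₂.cons (List.Perm.refl _) hFa)
        (by simpa using hcat) (by rw [hgw2]; simp)
    · rw [hgwe, gmap_assemble [a] _ (List.isChain_singleton a) hvE, hcdcd, chi_one,
        assemble_mk, hdecenc]
      exact hcat
  · -- p = a :: b :: p2
    rw [chi'_big _ (by simp only [List.length_cons]; omega) _] at hgw
    have hgwe : gmap' w = assemble ([], ((a :: b :: p2).length - 1, a :: b :: p2)
        :: (hs.map encD).map cD) := by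
      rw [hgw]; rfl
    have hmkP := mkHook_spec (a :: b :: p2) ((a :: b :: p2).length - 1) hp
      (by simp only [List.length_cons]; omega) (by simp only [List.length_cons]; omega)
    have hvE' : ValidE (((a :: b :: p2).length - 1, a :: b :: p2)
        :: (hs.map encD).map cD) := by
      intro d hd
      rcases List.mem_cons.mp hd with rfl | hd
      · refine ⟨hp, ?_, ?_⟩
        · show 1 ≤ (a :: b :: p2).length - 1
          simp only [List.length_cons]; omega
        · show (a :: b :: p2).length - 1 < (a :: b :: p2).length
          simp only [List.length_cons]; omega
      · exact hvE d hd
    have hgw2 : gmap' w = mkHook (a :: b :: p2) ((a :: b :: p2).length - 1)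
        ++ (hs.map (fun σ => decD (cD (encD σ)))).flatten := by
      rw [hgwe, assemble_mk]
      simp only [List.map_cons, List.flatten_cons, List.nil_append, hmapdec]
      rfl
    constructor
    · exact perm_of w (gmap' w) ((a :: b :: p2) :: hs)
        (mkHook (a :: b :: p2) ((a :: b :: p2).length - 1)
          :: hs.map (fun σ => decD (cD (encD σ))))
        (List.Forall₂.cons (hmkP.2.1).symm hFa)
        (by simpa using hcat) (by rw [hgw2]; simp)
    · rw [hgwe, gmap_assemble [] _ List.isChain_nil hvE', List.map_cons, hcdcd]
      show assemble (chi ([], ((a :: b :: p2).length - ((a :: b :: p2).length - 1),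
        a :: b :: p2) :: hs.map encD)) = w
      have h1 : (a :: b :: p2).length - ((a :: b :: p2).length - 1) = 1 := by
        simp only [List.length_cons]; omega
      rw [h1, chi_cons, if_pos rfl, assemble_mk, hdecenc]
      exact hcat

/-- There is an involution `π ↦ σ` on the permutations of `{1,…,n}` with
`lec(π) = n − 1 − lec(σ)` and `inv(π) − lec(π) = inv(σ) − lec(σ)`
(stated additively to avoid truncated subtraction). -/
theorem lec_involution (n : ℕ) (hn : 1 ≤ n) :
    ∃ f : {w : List ℕ // w.Perm (List.range' 1 n)} →
          {w : List ℕ // w.Perm (List.range' 1 n)},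
      Function.Involutive f ∧
      ∀ w, lec w.1 + lec (f w).1 = n - 1 ∧
        invList w.1 + lec (f w).1 = invList (f w).1 + lec w.1 := by
  have hrnd : (List.range' 1 n).Nodup := List.nodup_range'
  have hrlen : (List.range' 1 n).length = n := by simp
  have hProps : ∀ w : List ℕ, w.Perm (List.range' 1 n) →
      w.Nodup ∧ w ≠ [] ∧ w.length = n := by
    intro w hperm
    refine ⟨hperm.nodup_iff.mpr hrnd, ?_, ?_⟩
    · intro h
      rw [h] at hperm
      have := hperm.length_eq
      rw [hrlen] at this
      simp at this
      omega
    · rw [hperm.length_eq, hrlen]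
  refine ⟨fun w => if 2 * lecC w.1 + 1 < n then
      ⟨gmap w.1, (gmap_spec w.1 (hProps w.1 w.2).1 (hProps w.1 w.2).2.1).1.trans w.2⟩
    else if n < 2 * lecC w.1 + 1 then
      ⟨gmap' w.1, (gmap'_spec w.1 (hProps w.1 w.2).1 (hProps w.1 w.2).2.1).1.trans w.2⟩
    else w, ?_, ?_⟩
  · -- involutive
    intro w
    obtain ⟨hnd, hne, hlen⟩ := hProps w.1 w.2
    have hg := gmap_spec w.1 hnd hne
    have hg' := gmap'_spec w.1 hnd hne
    have hv2 : (gmap' w.1).Perm (List.range' 1 n) := hg'.1.trans w.2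
    obtain ⟨hnd2, hne2, hlen2⟩ := hProps _ hv2
    have hgv := gmap_spec (gmap' w.1) hnd2 hne2
    have hsum1 : lecC w.1 + lecC (gmap w.1) = n - 1 := by
      have := hg.2.1; rw [hlen] at this; exact this
    have hsum2 : lecC (gmap' w.1) + lecC w.1 = n - 1 := by
      have := hgv.2.1; rw [hg'.2, hlen2] at this; exact this
    dsimp only
    by_cases h1 : 2 * lecC w.1 + 1 < n
    · rw [if_pos h1]
      dsimp only
      rw [if_neg (by omega : ¬ (2 * lecC (gmap w.1) + 1 < n)),
        if_pos (by omega : n < 2 * lecC (gmap w.1) + 1)]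
      exact Subtype.ext hg.2.2.2
    · rw [if_neg h1]
      by_cases h2 : n < 2 * lecC w.1 + 1
      · rw [if_pos h2]
        dsimp only
        rw [if_pos (by omega : 2 * lecC (gmap' w.1) + 1 < n)]
        exact Subtype.ext hg'.2
      · rw [if_neg h2]
        rw [if_neg h1, if_neg h2]
  · -- statistics
    intro w
    obtain ⟨hnd, hne, hlen⟩ := hProps w.1 w.2
    have hg := gmap_spec w.1 hnd hne
    have hg' := gmap'_spec w.1 hnd hne
    have hv2 : (gmap' w.1).Perm (List.range' 1 n) := hg'.1.trans w.2
    obtain ⟨hnd2, hne2, hlen2⟩ := hProps _ hv2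
    have hgv := gmap_spec (gmap' w.1) hnd2 hne2
    have hgperm : (gmap w.1).Perm (List.range' 1 n) := hg.1.trans w.2
    obtain ⟨hnd1, hne1, hlen1⟩ := hProps _ hgperm
    have hsum1 : lecC w.1 + lecC (gmap w.1) = n - 1 := by
      have := hg.2.1; rw [hlen] at this; exact this
    have hsum2 : lecC (gmap' w.1) + lecC w.1 = n - 1 := by
      have := hgv.2.1; rw [hg'.2, hlen2] at this; exact this
    have hinv2 : invList (gmap' w.1) + lecC w.1 = invList w.1 + lecC (gmap' w.1) := by
      have := hgv.2.2.1; rw [hg'.2] at this; omega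
    dsimp only
    by_cases h1 : 2 * lecC w.1 + 1 < n
    · rw [if_pos h1]
      dsimp only
      rw [lec_eq_lecC _ hnd, lec_eq_lecC _ hnd1]
      exact ⟨hsum1, hg.2.2.1⟩
    · rw [if_neg h1]
      by_cases h2 : n < 2 * lecC w.1 + 1
      · rw [if_pos h2]
        dsimp only
        rw [lec_eq_lecC _ hnd, lec_eq_lecC _ hnd2]
        exact ⟨by omega, by omega⟩
      · rw [if_neg h2]
        rw [lec_eq_lecC _ hnd]
        exact ⟨by omega, rfl⟩
end

section
/- For any hook τ with content (set of letters) of size m and inv(τ) = k, there is a unique hook d(τ) with the same content and inv(d(τ)) = m − k; explicitly, if the content is {x_1 < ⋯ < x_m}, then d(τ) = x_{m−k+1} x_1 ⋯ x_{m−k} x_{m−k+2} ⋯ x_m. -/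
/-- A strictly increasing word has no inversions. -/
lemma invList_eq_zero {w : List ℕ} (h : w.Pairwise (· < ·)) : invList w = 0 := by
  induction w with
  | nil => rfl
  | cons a t ih =>
    rw [List.pairwise_cons] at h
    simp only [invList, ih h.2, Nat.add_zero, List.countP_eq_zero]
    intro y hy
    simp only [decide_eq_true_eq]
    exact not_lt.2 (h.1 y hy).le

/-- For a sorted list, the length of `takeWhile (· < a)` is the number of elements `< a`. -/
lemma takeWhile_length_eq_countP (a : ℕ) : ∀ {w : List ℕ}, w.Pairwise (· < ·) →
    (w.takeWhile (fun b => decide (b < a))).length = w.countP (fun b => decide (b < a))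
  | [], _ => rfl
  | b :: t, h => by
    rw [List.pairwise_cons] at h
    by_cases hb : b < a
    · rw [List.takeWhile_cons_of_pos (by simpa using hb),
        List.countP_cons_of_pos (by simpa using hb), List.length_cons,
        takeWhile_length_eq_countP a h.2]
    · rw [List.takeWhile_cons_of_neg (by simpa using hb), List.length_nil,
        List.countP_cons_of_neg (by simpa using hb)]
      symm
      rw [List.countP_eq_zero]
      intro c hc
      simp only [decide_eq_true_eq, not_lt]
      exact (not_lt.1 hb).trans (h.1 c hc).le

lemma eraseIdx_append_cons (t d : List ℕ) (a : ℕ) :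
    (t ++ a :: d).eraseIdx t.length = t ++ d := by
  induction t with
  | nil => rfl
  | cons b t ih => simp [List.eraseIdx_cons_succ, ih]

/-- Canonical form of a hook: it is `x_{j+1}` followed by the sorted list with the
`j`-th entry removed, where `j` is the inversion number; moreover `1 ≤ j ≤ m - 1`. -/
lemma hook_canon {σ : List ℕ} (h : IsHook σ) :
    1 ≤ invList σ ∧ invList σ ≤ σ.length - 1 ∧
    σ = (List.insertionSort (· ≤ ·) σ).getD (invList σ) 0 ::
        (List.insertionSort (· ≤ ·) σ).eraseIdx (invList σ) := by
  obtain ⟨hnd, a, y, rest, rfl, hya, hch⟩ := h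
  set w : List ℕ := y :: rest with hw
  have hpw : w.Pairwise (· < ·) := List.isChain_iff_pairwise.1 hch
  have hinvw : invList w = 0 := invList_eq_zero hpw
  have hj : invList (a :: w) = w.countP (fun b => decide (b < a)) := by
    show w.countP _ + invList w = _
    rw [hinvw, Nat.add_zero]
  -- the sorted list
  have hsortw : List.insertionSort (· ≤ ·) w = w :=
    List.Pairwise.insertionSort_eq (hpw.imp le_of_lt)
  have hsort : List.insertionSort (· ≤ ·) (a :: w) =
      (w.takeWhile fun b => decide (b < a)) ++ a :: (w.dropWhile fun b => decide (b < a)) := by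
    rw [show List.insertionSort (· ≤ ·) (a :: w)
         = (List.insertionSort (· ≤ ·) w).orderedInsert (· ≤ ·) a from rfl,
      hsortw, List.orderedInsert_eq_take_drop]
    have : (fun b => decide ¬ a ≤ b) = (fun b : ℕ => decide (b < a)) := by
      funext b; simp [Nat.not_le]
    rw [this]
  set t := w.takeWhile fun b => decide (b < a) with ht
  set dr := w.dropWhile fun b => decide (b < a) with hdr
  have hlt : t.length = invList (a :: w) := by
    rw [hj, ht, takeWhile_length_eq_countP a hpw]
  refine ⟨?_, ?_, ?_⟩
  · rw [hj]
    exact List.countP_pos_iff.2 ⟨y, by simp [hw], by simpa using hya⟩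
  · rw [hj]
    simpa using List.countP_le_length (l := w) (p := fun b => decide (b < a))
  · rw [hsort, ← hlt, List.getD_append_right _ _ _ _ le_rfl]
    simp only [Nat.sub_self, List.getD_cons_zero]
    rw [eraseIdx_append_cons, List.takeWhile_append_dropWhile]

/-- Building a hook with inversion number `j` from a sorted list. -/
lemma hook_build {xs : List ℕ} (hs : xs.Pairwise (· < ·)) {j : ℕ}
    (h1 : 1 ≤ j) (h2 : j ≤ xs.length - 1) :
    IsHook (xs.getD j 0 :: xs.eraseIdx j) ∧ (xs.getD j 0 :: xs.eraseIdx j).Perm xs ∧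
    invList (xs.getD j 0 :: xs.eraseIdx j) = j := by
  obtain ⟨j, rfl⟩ : ∃ j', j = j' + 1 := ⟨j - 1, by omega⟩
  match xs, hs with
  | [], _ => simp at h2
  | x0 :: t, hs =>
    rw [List.pairwise_cons] at hs
    have hjt : j < t.length := by simp at h2; omega
    have hgd : (x0 :: t).getD (j + 1) 0 = t[j] := by
      rw [List.getD_cons_succ, List.getD_eq_getElem _ _ hjt]
    have her : (x0 :: t).eraseIdx (j + 1) = x0 :: t.eraseIdx j := rfl
    rw [hgd, her]
    have hx0 : x0 < t[j] := hs.1 _ (List.getElem_mem hjt)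
    have hte : t.eraseIdx j = t.take j ++ t.drop (j + 1) := List.eraseIdx_eq_take_drop_succ t j
    -- perm
    have hperm : (t[j] :: x0 :: t.eraseIdx j).Perm (x0 :: t) := by
      refine (List.Perm.swap _ _ _).trans (List.Perm.cons x0 ?_)
      rw [hte]
      refine List.perm_middle.symm.trans ?_
      rw [List.cons_getElem_drop_succ, List.take_append_drop]
    have hpw' : (x0 :: t.eraseIdx j).Pairwise (· < ·) :=
      List.Pairwise.sublist ((t.eraseIdx_sublist j).cons_cons x0)
        (List.pairwise_cons.2 hs)
    have hnodup : (t[j] :: x0 :: t.eraseIdx j).Nodup := by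
      refine hperm.nodup_iff.2 ?_
      exact (List.pairwise_cons.2 hs).imp ne_of_lt
    have htake : ∀ x ∈ t.take j, x < t[j] := by
      intro x hx
      obtain ⟨i, hi, rfl⟩ := List.mem_iff_getElem.1 hx
      rw [List.getElem_take]
      exact List.pairwise_iff_getElem.1 hs.2 i j (by simp at hi; omega) hjt
        (by simp at hi; omega)
    have hdrop : ∀ x ∈ t.drop (j + 1), ¬ x < t[j] := by
      intro x hx
      obtain ⟨i, hi, rfl⟩ := List.mem_iff_getElem.1 hx
      rw [List.getElem_drop]
      exact not_lt.2 (List.pairwise_iff_getElem.1 hs.2 j (j + 1 + i) hjt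
        (by simp at hi; omega) (by omega)).le
    refine ⟨⟨hnodup, t[j], x0, t.eraseIdx j, rfl, hx0, List.isChain_iff_pairwise.2 hpw'⟩,
      hperm, ?_⟩
    have hz : invList (x0 :: t.eraseIdx j) = 0 := invList_eq_zero hpw'
    show (x0 :: t.eraseIdx j).countP (fun y => decide (y < t[j])) + _ = j + 1
    rw [hz, Nat.add_zero, List.countP_cons_of_pos (by simpa using hx0), hte,
      List.countP_append]
    have hc1 : (t.take j).countP (fun y => decide (y < t[j])) = j := by
      have hlen : (t.take j).countP (fun y => decide (y < t[j])) = (t.take j).length :=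
        List.countP_eq_length.2 (fun a ha => by simpa using htake a ha)
      rw [hlen, List.length_take]; omega
    have hc2 : (t.drop (j + 1)).countP (fun y => decide (y < t[j])) = 0 :=
      List.countP_eq_zero.2 (fun a ha => by simpa using hdrop a ha)
    omega

/-- For a hook `τ` on `m` letters with `inv(τ) = k` and content `{x₁ < ⋯ < x_m}`,
the word `d(τ) = x_{m−k+1} x₁ ⋯ x_{m−k} x_{m−k+2} ⋯ x_m` is the unique hook with
the same content and inversion number `m − k`. -/
theorem hook_complement_existsUnique (τ : List ℕ) (hτ : IsHook τ) :
    let m := τ.length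
    let k := invList τ
    let xs := List.insertionSort (· ≤ ·) τ
    let d := xs.getD (m - k) 0 :: xs.eraseIdx (m - k)
    (IsHook d ∧ d.Perm τ ∧ invList d = m - k) ∧
    ∀ σ : List ℕ, IsHook σ → σ.Perm τ → invList σ = m - k → σ = d := by
  intro m k xs d
  obtain ⟨hk1, hk2, _⟩ := hook_canon hτ
  have hm2 : 2 ≤ m := by
    obtain ⟨_, x, y, rest, hτe, _, _⟩ := hτ
    simp only [m, hτe, List.length_cons]; omega
  have hxsl : xs.length = m := (List.perm_insertionSort _ τ).length_eq
  have hxsp : xs.Pairwise (· < ·) := by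
    have hnd : xs.Nodup := (List.perm_insertionSort _ τ).nodup_iff.2 hτ.1
    exact List.sortedLT_iff_pairwise.1
      ((List.sortedLE_iff_pairwise.2 (List.pairwise_insertionSort _ τ)).sortedLT_of_nodup hnd)
  have h1 : 1 ≤ m - k := by omega
  have h2 : m - k ≤ xs.length - 1 := by omega
  obtain ⟨hd1, hd2, hd3⟩ := hook_build hxsp h1 h2
  refine ⟨⟨hd1, hd2.trans (List.perm_insertionSort _ τ), hd3⟩, ?_⟩
  intro σ hσ hσp hσi
  obtain ⟨_, _, hcanon⟩ := hook_canon hσ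
  have hsorteq : List.insertionSort (· ≤ ·) σ = xs := by
    refine List.Perm.eq_of_pairwise' (List.pairwise_insertionSort _ σ)
      (List.pairwise_insertionSort _ τ) ?_
    exact (List.perm_insertionSort _ σ).trans (hσp.trans (List.perm_insertionSort _ τ).symm)
  rw [hcanon, hsorteq, hσi]
end

section
/- Define polynomials A_n^{(r)}(t,q) by (e(z;q^r) − e(t^r z; q^r))/(e(t^r z; q^r) − t·e(z;q^r)) = ∑_{n≥1} A_n^{(r)}(t,q) z^n/(q^r;q^r)_n. Then A_n^{(r)}(1,1) = r^n · n! for all n ≥ 1 and r ≥ 1. -/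
open Polynomial PowerSeries

/-- The q-shifted factorial `(q^r;q^r)_n = ∏_{i=1}^n (1 - q^{ri})`. -/
noncomputable def qrfac (r n : ℕ) : RatFunc ℚ :=
  ∏ i ∈ Finset.range n, (1 - (qq ^ r) ^ (i + 1))

/-- `e(z;q^r) = ∑ z^n/(q^r;q^r)_n`, a power series in `z` over `ℚ(q)[t]`. -/
noncomputable def qexpZr (r : ℕ) : PowerSeries (Polynomial (RatFunc ℚ)) :=
  PowerSeries.mk fun n => Polynomial.C (qrfac r n)⁻¹

/-- `e(t^r z;q^r) = ∑ t^{rn} z^n/(q^r;q^r)_n`. -/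
noncomputable def qexpTZr (r : ℕ) : PowerSeries (Polynomial (RatFunc ℚ)) :=
  PowerSeries.mk fun n => Polynomial.X ^ (r * n) * Polynomial.C (qrfac r n)⁻¹

lemma ratfunc_X_pow_ne_one {m : ℕ} (hm : 1 ≤ m) : (RatFunc.X : RatFunc ℚ) ^ m ≠ 1 := by
  intro h
  have h2 : (algebraMap (Polynomial ℚ) (RatFunc ℚ)) (Polynomial.X ^ m) =
      (algebraMap (Polynomial ℚ) (RatFunc ℚ)) 1 := by
    simpa [map_pow, RatFunc.algebraMap_X] using h
  have h3 : (Polynomial.X : Polynomial ℚ) ^ m = 1 := RatFunc.algebraMap_injective ℚ h2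
  have h4 := congrArg Polynomial.natDegree h3
  simp [Polynomial.natDegree_X_pow] at h4
  omega

lemma one_sub_qpow_ne_zero {r m : ℕ} (hr : 1 ≤ r) (hm : 1 ≤ m) :
    (1 : RatFunc ℚ) - (qq ^ r) ^ m ≠ 0 := by
  rw [sub_ne_zero]
  intro h
  have : (RatFunc.X : RatFunc ℚ) ^ (r * m) = 1 := by
    rw [pow_mul]; exact h.symm
  exact ratfunc_X_pow_ne_one (Nat.one_le_iff_ne_zero.2 (by positivity)) this

lemma qrfac_zero (r : ℕ) : qrfac r 0 = 1 := by simp [qrfac]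

lemma qrfac_succ (r n : ℕ) : qrfac r (n + 1) = qrfac r n * (1 - (qq ^ r) ^ (n + 1)) := by
  rw [qrfac, qrfac, Finset.prod_range_succ]

lemma qrfac_ne_zero {r : ℕ} (hr : 1 ≤ r) (n : ℕ) : qrfac r n ≠ 0 := by
  rw [qrfac]
  exact Finset.prod_ne_zero_iff.2 fun i _ => one_sub_qpow_ne_zero hr (by omega)

/-- q-binomial coefficients are polynomials in q that evaluate to binomials at q = 1. -/
lemma gb_poly {r : ℕ} (hr : 1 ≤ r) : ∀ n k : ℕ, k ≤ n →
    ∃ p : Polynomial ℚ, algebraMap (Polynomial ℚ) (RatFunc ℚ) p =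
        qrfac r n * (qrfac r k)⁻¹ * (qrfac r (n - k))⁻¹ ∧ p.eval 1 = n.choose k := by
  intro n
  induction n with
  | zero =>
    intro k hk
    interval_cases k
    exact ⟨1, by simp [qrfac_zero], by simp⟩
  | succ n ih =>
    intro k hk
    match k with
    | 0 =>
      refine ⟨1, ?_, by simp⟩
      have h := qrfac_ne_zero hr (n + 1)
      field_simp [qrfac_zero]
      simp [qrfac_zero, h]
    | (j + 1) =>
      rcases eq_or_lt_of_le hk with heq | hlt
      · -- k = n + 1
        rw [heq]
        refine ⟨1, ?_, by simp⟩
        have h := qrfac_ne_zero hr (n + 1)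
        field_simp [qrfac_zero]
        simp [qrfac_zero, h]
      · -- j + 1 ≤ n : Pascal recursion
        have hjn : j + 1 ≤ n := by omega
        obtain ⟨p1, hp1, he1⟩ := ih j (by omega)
        obtain ⟨p2, hp2, he2⟩ := ih (j + 1) hjn
        refine ⟨p1 + Polynomial.X ^ (r * (j + 1)) * p2, ?_, ?_⟩
        · rw [map_add, map_mul, map_pow, RatFunc.algebraMap_X, hp1, hp2]
          have hnj : n + 1 - (j + 1) = n - j := by omega
          have hnj2 : n - (j + 1) = (n - j) - 1 := by omega
          have hnj3 : n - j = ((n - j) - 1) + 1 := by omega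
          rw [hnj, hnj2, qrfac_succ r n]
          rw [hnj3, qrfac_succ r ((n - j) - 1), qrfac_succ r j]
          set a := (qq ^ r) ^ (j + 1) with ha
          set b := (qq ^ r) ^ ((n - j - 1) + 1) with hb
          have hab : (qq ^ r) ^ (n + 1) = a * b := by
            rw [ha, hb, ← pow_add]
            congr 1
            omega
          have hXa : (RatFunc.X : RatFunc ℚ) ^ (r * (j + 1)) = a := by
            rw [ha, ← pow_mul, qq]
          rw [hab, hXa]
          have h1 : qrfac r n ≠ 0 := qrfac_ne_zero hr n
          have h2 : qrfac r j ≠ 0 := qrfac_ne_zero hr j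
          have h3 : qrfac r (n - j - 1) ≠ 0 := qrfac_ne_zero hr (n - j - 1)
          have h4 : (1 : RatFunc ℚ) - a ≠ 0 := one_sub_qpow_ne_zero hr (by omega)
          have h5 : (1 : RatFunc ℚ) - b ≠ 0 := one_sub_qpow_ne_zero hr (by omega)
          simp only [Nat.add_sub_cancel]
          field_simp
          ring
        · have := Nat.choose_succ_succ n j
          simp [Polynomial.eval_add, Polynomial.eval_mul, Polynomial.eval_pow, he1, he2, this]

/-- Sums of algebraMap-representable elements are representable. -/
lemma exists_poly_sum {ι : Type*} (s : Finset ι) (F : ι → RatFunc ℚ) (V : ι → ℚ)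
    (h : ∀ i ∈ s, ∃ p : Polynomial ℚ,
        algebraMap (Polynomial ℚ) (RatFunc ℚ) p = F i ∧ p.eval 1 = V i) :
    ∃ p : Polynomial ℚ, algebraMap (Polynomial ℚ) (RatFunc ℚ) p = ∑ i ∈ s, F i ∧
      p.eval 1 = ∑ i ∈ s, V i := by
  classical
  induction s using Finset.cons_induction with
  | empty => exact ⟨0, by simp, by simp⟩
  | cons a s ha ih =>
    obtain ⟨p, hp1, hp2⟩ := h a (Finset.mem_cons_self a s)
    obtain ⟨q, hq1, hq2⟩ := ih fun i hi => h i (Finset.mem_cons_of_mem hi)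
    exact ⟨p + q, by rw [Finset.sum_cons, map_add, hp1, hq1],
      by rw [Finset.sum_cons, Polynomial.eval_add, hp2, hq2]⟩

/-- The telescoping numeric identity. -/
lemma numeric_identity (r n : ℕ) (hr : 1 ≤ r) (hn : 1 ≤ n) :
    (r : ℚ) * n + ∑ i ∈ Finset.range n,
      ((((r * (i + 1) : ℕ) : ℚ) - 1) * (n.choose (i + 1)) *
        (if n - (i + 1) = 0 then 0 else (r : ℚ) ^ (n - (i + 1)) * (n - (i + 1)).factorial)) =
    (r : ℚ) ^ n * n.factorial := by
  obtain ⟨m, rfl⟩ : ∃ m, n = m + 1 := ⟨n - 1, by omega⟩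
  rw [Finset.sum_range_succ]
  have hlast : (m + 1) - (m + 1) = 0 := by omega
  rw [hlast]
  simp only [if_pos rfl, mul_zero, add_zero]
  set v : ℕ → ℚ := fun k => (r : ℚ) ^ (m + 1 - k) * (m + 1).factorial / k.factorial with hv
  have hterm : ∀ i ∈ Finset.range m,
      ((((r * (i + 1) : ℕ) : ℚ) - 1) * ((m + 1).choose (i + 1)) *
        (if (m + 1) - (i + 1) = 0 then 0 else
          (r : ℚ) ^ ((m + 1) - (i + 1)) * ((m + 1) - (i + 1)).factorial)) = v i - v (i + 1) := by
    intro i hi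
    rw [Finset.mem_range] at hi
    have h1 : (m + 1) - (i + 1) = m - i := by omega
    have h2 : m - i ≠ 0 := by omega
    rw [h1, if_neg h2]
    have hle : i + 1 ≤ m + 1 := by omega
    have hch : ((m + 1).choose (i + 1) : ℚ) =
        (m + 1).factorial / ((i + 1).factorial * ((m + 1) - (i + 1)).factorial) :=
      Nat.cast_choose ℚ hle
    have h3 : (m + 1) - (i + 1) = m - i := by omega
    rw [h3] at hch
    rw [hch]
    simp only [hv]
    have h4 : m + 1 - i = (m - i) + 1 := by omega
    have h5 : m + 1 - (i + 1) = m - i := by omega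
    rw [h4, h5]
    have hf1 : ((i + 1).factorial : ℚ) ≠ 0 := by positivity
    have hf2 : ((m - i).factorial : ℚ) ≠ 0 := by positivity
    have hf3 : (i.factorial : ℚ) ≠ 0 := by positivity
    have hfs : ((i + 1).factorial : ℚ) = (i + 1) * i.factorial := by
      rw [Nat.factorial_succ]; push_cast; ring
    rw [pow_succ]
    field_simp [hfs]
    push_cast
    rw [Nat.factorial_succ]; push_cast; ring
  rw [Finset.sum_congr rfl hterm, Finset.sum_range_sub']
  have hv0 : v 0 = (r : ℚ) ^ (m + 1) * (m + 1).factorial := by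
    simp [hv]
  have hvm : v m = (r : ℚ) * (m + 1) := by
    simp only [hv]
    have h6 : m + 1 - m = 1 := by omega
    have h7 : ((m + 1).factorial : ℚ) = (m + 1) * m.factorial := by
      rw [Nat.factorial_succ]; push_cast; ring
    rw [h6, h7]
    have : (m.factorial : ℚ) ≠ 0 := by positivity
    field_simp
  rw [hv0, hvm]
  push_cast
  ring

/-- If the `A n = A_n^{(r)}(t,q)` satisfy the defining generating function
`(e(z;q^r) − e(t^r z;q^r))/(e(t^r z;q^r) − t e(z;q^r)) = ∑_{n≥1} A_n^{(r)}(t,q) z^n/(q^r;q^r)_n`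
(cross-multiplied form), then `A_n^{(r)}(1,1) = r^n n!` for `n, r ≥ 1`,
evaluating first at `t = 1` and then at `q = 1`. -/
theorem colored_qEulerian_card (r : ℕ) (hr : 1 ≤ r) (A : ℕ → Polynomial (RatFunc ℚ))
    (hA : (qexpTZr r - PowerSeries.C (Polynomial.X : Polynomial (RatFunc ℚ)) * qexpZr r) *
        PowerSeries.mk (fun n => A n * Polynomial.C (qrfac r n)⁻¹) =
      qexpZr r - qexpTZr r) :
    ∀ n : ℕ, 1 ≤ n →
      RatFunc.eval (RingHom.id ℚ) 1 (Polynomial.eval (1 : RatFunc ℚ) (A n)) =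
        (r : ℚ) ^ n * n.factorial := by
  have hA0 : A 0 = 0 := by
    have h0 := congrArg (PowerSeries.constantCoeff) hA
    simp only [map_mul, map_sub, qexpZr, qexpTZr, PowerSeries.constantCoeff_mk,
      PowerSeries.constantCoeff_C, qrfac_zero, inv_one, map_one, mul_one, pow_zero,
      mul_zero, sub_self] at h0
    rcases mul_eq_zero.1 h0 with h | h
    · exfalso
      apply Polynomial.X_sub_C_ne_zero (1 : RatFunc ℚ)
      rw [Polynomial.C_1]
      linear_combination -h
    · exact h
  have hX1 : (Polynomial.X - 1 : Polynomial (RatFunc ℚ)) ≠ 0 := by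
    have := Polynomial.X_sub_C_ne_zero (1 : RatFunc ℚ)
    rwa [Polynomial.C_1] at this
  have key : ∀ n : ℕ, 1 ≤ n → (A n).eval 1 =
      ((r * n : ℕ) : RatFunc ℚ) + ∑ i ∈ Finset.range n,
        ((((r * (i + 1) : ℕ) : RatFunc ℚ) - 1) *
          (qrfac r n * (qrfac r (i + 1))⁻¹ * (qrfac r (n - (i + 1)))⁻¹) *
          (A (n - (i + 1))).eval 1) := by
    intro n hn
    have h1 := congrArg (PowerSeries.coeff n) hA
    rw [PowerSeries.coeff_mul] at h1
    simp only [map_sub, qexpZr, qexpTZr, PowerSeries.coeff_mk, PowerSeries.coeff_C_mul] at h1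
    rw [Finset.Nat.sum_antidiagonal_eq_sum_range_succ_mk] at h1
    simp only [] at h1
    have h2 : ∀ k ∈ Finset.range (n + 1),
        (Polynomial.X ^ (r * k) * Polynomial.C (qrfac r k)⁻¹ -
            Polynomial.X * Polynomial.C (qrfac r k)⁻¹) *
          (A (n - k) * Polynomial.C (qrfac r (n - k))⁻¹) =
        (Polynomial.X - 1) *
          (((∑ j ∈ Finset.range (r * k), Polynomial.X ^ j) - 1) * Polynomial.C (qrfac r k)⁻¹ *
            (A (n - k) * Polynomial.C (qrfac r (n - k))⁻¹)) := by
      intro k _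
      have hg := geom_sum_mul (Polynomial.X : Polynomial (RatFunc ℚ)) (r * k)
      linear_combination (-(Polynomial.C (qrfac r k)⁻¹ *
        (A (n - k) * Polynomial.C (qrfac r (n - k))⁻¹))) * hg
    rw [Finset.sum_congr rfl h2, ← Finset.mul_sum] at h1
    have h3 : (Polynomial.C (qrfac r n)⁻¹ : Polynomial (RatFunc ℚ)) -
        Polynomial.X ^ (r * n) * Polynomial.C (qrfac r n)⁻¹ =
        (Polynomial.X - 1) *
          (-((∑ j ∈ Finset.range (r * n), Polynomial.X ^ j) * Polynomial.C (qrfac r n)⁻¹)) := by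
      have hg := geom_sum_mul (Polynomial.X : Polynomial (RatFunc ℚ)) (r * n)
      linear_combination Polynomial.C (qrfac r n)⁻¹ * hg
    rw [h3] at h1
    have h4 := mul_left_cancel₀ hX1 h1
    have h5 := congrArg (Polynomial.eval (1 : RatFunc ℚ)) h4
    simp only [Polynomial.eval_finset_sum, Polynomial.eval_mul, Polynomial.eval_sub,
      Polynomial.eval_neg, Polynomial.eval_one, Polynomial.eval_C, Polynomial.eval_pow,
      Polynomial.eval_X, one_pow, Finset.sum_const, Finset.card_range, nsmul_eq_mul,
      mul_one] at h5
    rw [Finset.sum_range_succ'] at h5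
    simp only [Nat.mul_zero, Nat.cast_zero, zero_sub, qrfac_zero, inv_one, mul_one,
      Nat.sub_zero, neg_mul, one_mul, neg_one_mul] at h5
    -- h5 : ∑ i ∈ range n, (↑(r*(i+1)) - 1) * (f (i+1))⁻¹ * ((A (n-(i+1))).eval 1 * (f (n-(i+1)))⁻¹)
    --        + -( (A n).eval 1 * (f n)⁻¹ ) = -( ↑(r*n) * (f n)⁻¹ )
    have hfn := qrfac_ne_zero hr n
    have h6 : (A n).eval 1 * (qrfac r n)⁻¹ =
        ((r * n : ℕ) : RatFunc ℚ) * (qrfac r n)⁻¹ + ∑ k ∈ Finset.range n,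
          ((((r * (k + 1) : ℕ) : RatFunc ℚ) - 1) * (qrfac r (k + 1))⁻¹ *
            ((A (n - (k + 1))).eval 1 * (qrfac r (n - (k + 1)))⁻¹)) := by
      linear_combination -h5
    calc (A n).eval 1 = qrfac r n * ((A n).eval 1 * (qrfac r n)⁻¹) := by
          field_simp
      _ = qrfac r n * (((r * n : ℕ) : RatFunc ℚ) * (qrfac r n)⁻¹ + ∑ k ∈ Finset.range n,
          ((((r * (k + 1) : ℕ) : RatFunc ℚ) - 1) * (qrfac r (k + 1))⁻¹ *
            ((A (n - (k + 1))).eval 1 * (qrfac r (n - (k + 1)))⁻¹))) := by rw [h6]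
      _ = ((r * n : ℕ) : RatFunc ℚ) + ∑ i ∈ Finset.range n,
          ((((r * (i + 1) : ℕ) : RatFunc ℚ) - 1) *
            (qrfac r n * (qrfac r (i + 1))⁻¹ * (qrfac r (n - (i + 1)))⁻¹) *
            (A (n - (i + 1))).eval 1) := by
          rw [mul_add, Finset.mul_sum]
          congr 1
          · field_simp
          · exact Finset.sum_congr rfl fun i _ => by ring
  have main : ∀ n : ℕ, ∃ p : Polynomial ℚ,
      algebraMap (Polynomial ℚ) (RatFunc ℚ) p = (A n).eval 1 ∧
      p.eval 1 = (if n = 0 then 0 else (r : ℚ) ^ n * n.factorial) := by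
    intro n
    induction n using Nat.strong_induction_on with
    | _ n ih =>
      rcases Nat.eq_zero_or_pos n with rfl | hn
      · exact ⟨0, by simp [hA0], by simp⟩
      · have hrec := key n hn
        have hcast : ∀ m : ℕ, algebraMap (Polynomial ℚ) (RatFunc ℚ)
            (Polynomial.C ((m : ℚ))) = ((m : ℕ) : RatFunc ℚ) := by
          intro m
          rw [Polynomial.C_eq_natCast, map_natCast]
        have hterm : ∀ i ∈ Finset.range n, ∃ p : Polynomial ℚ,
            algebraMap (Polynomial ℚ) (RatFunc ℚ) p =
              ((((r * (i + 1) : ℕ) : RatFunc ℚ) - 1) *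
                (qrfac r n * (qrfac r (i + 1))⁻¹ * (qrfac r (n - (i + 1)))⁻¹) *
                (A (n - (i + 1))).eval 1) ∧
            p.eval 1 = ((((r * (i + 1) : ℕ) : ℚ) - 1) * (n.choose (i + 1)) *
              (if n - (i + 1) = 0 then 0 else
                (r : ℚ) ^ (n - (i + 1)) * (n - (i + 1)).factorial)) := by
          intro i hi
          rw [Finset.mem_range] at hi
          obtain ⟨g, hg, hge⟩ := gb_poly hr n (i + 1) (by omega)
          obtain ⟨p, hp, hpe⟩ := ih (n - (i + 1)) (by omega)
          refine ⟨(Polynomial.C (((r * (i + 1) : ℕ) : ℚ)) - 1) * g * p, ?_, ?_⟩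
          · rw [map_mul, map_mul, map_sub, map_one, hcast, hg, hp]
          · rw [Polynomial.eval_mul, Polynomial.eval_mul, Polynomial.eval_sub,
              Polynomial.eval_one, Polynomial.eval_C, hge, hpe]
        obtain ⟨ps, hps, hpse⟩ := exists_poly_sum (Finset.range n) _ _ hterm
        refine ⟨Polynomial.C (((r * n : ℕ) : ℚ)) + ps, ?_, ?_⟩
        · rw [map_add, hps, hcast, hrec]
        · rw [Polynomial.eval_add, hpse, Polynomial.eval_C, if_neg (by omega)]
          have hnum := numeric_identity r n hr hn
          push_cast at hnum ⊢
          convert hnum using 2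
  rcases main 0 with _
  intro n hn
  obtain ⟨p, hp, hpe⟩ := main n
  rw [← hp, RatFunc.eval_algebraMap]
  rw [show (algebraMap (Polynomial ℚ) (Polynomial ℚ)) p = p from Algebra.algebraMap_self_apply p]
  rw [show Polynomial.eval₂ (RingHom.id ℚ) 1 p = p.eval 1 from rfl, hpe, if_neg (by omega)]
end
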